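/- arXiv:1705.06167 — 7 statements merged into one kernel-verified Lean document; each statement's English description precedes it below -/
import Mathlib

section
/- For all x > 0, Γ(x)/(x^x e^{−x} √(2π)) < exp(−(1/2)·ψ(δ(x))), where δ(x) = (1/2)·1/((x+1)·log(1 + 1/x) − 1). -/
open Real Filter MeasureTheory intervalIntegral Set

noncomputable def psi (x : ℝ) : ℝ := deriv Real.Gamma x / Real.Gamma x

noncomputable def δ (x : ℝ) : ℝ := (1/2) * (1 / ((x + 1) * Real.log (1 + 1/x) - 1))

noncomputable def lG : ℝ → ℝ := fun t => Real.log (Real.Gamma t)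

noncomputable def HH : ℝ → ℝ := fun x => (∫ t in x..x+1, lG t) - (x * Real.log x - x)


-- === from s1.lean ===
lemma hasDerivAt_lG {x : ℝ} (hx : 0 < x) : HasDerivAt lG (psi x) x := by
  have hd : DifferentiableAt ℝ Real.Gamma x := by
    apply Real.differentiableAt_Gamma
    intro m
    intro h
    have : (0:ℝ) < -(m:ℝ) := h ▸ hx
    have : (0:ℝ) ≤ (m:ℝ) := Nat.cast_nonneg m
    linarith
  have hpos := Real.Gamma_pos_of_pos hx
  exact hd.hasDerivAt.log hpos.ne'

lemma lG_add_one {x : ℝ} (hx : 0 < x) : lG (x+1) = lG x + Real.log x := by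
  unfold lG
  rw [Real.Gamma_add_one hx.ne', Real.log_mul hx.ne' (Real.Gamma_pos_of_pos hx).ne', add_comm]

lemma psi_add_one {x : ℝ} (hx : 0 < x) : psi (x+1) = psi x + 1/x := by
  have h1 : HasDerivAt (fun y => lG (y+1)) (psi (x+1)) x := by
    have := (hasDerivAt_lG (by linarith : (0:ℝ) < x + 1)).comp x
      ((hasDerivAt_id x).add_const 1)
    exact this.congr_deriv (by simp)
  have h2 : HasDerivAt (fun y => lG y + Real.log y) (psi x + 1/x) x := by
    have := (hasDerivAt_lG hx).add (Real.hasDerivAt_log hx.ne')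
    exact this.congr_deriv (by ring)
  have heq : (fun y => lG (y+1)) =ᶠ[nhds x] (fun y => lG y + Real.log y) := by
    filter_upwards [IsOpen.mem_nhds isOpen_Ioi hx] with y hy
    exact lG_add_one hy
  exact h1.unique (h2.congr_of_eventuallyEq heq)

lemma convexOn_lG : ConvexOn ℝ (Set.Ioi 0) lG := Real.convexOn_log_Gamma

-- === from s2.lean ===
lemma psi_le_log {x : ℝ} (hx : 0 < x) : psi x ≤ Real.log x := by
  have hslope : Tendsto (slope lG x) (nhdsWithin x (Set.Ioi x)) (nhds (psi x)) :=
    (hasDerivAt_iff_tendsto_slope.mp (hasDerivAt_lG hx)).mono_left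
      (nhdsWithin_mono x (fun y hy => Set.mem_compl_singleton_iff.mpr (ne_of_gt hy)))
  refine le_of_tendsto hslope ?_
  filter_upwards [Ioo_mem_nhdsGT_of_mem (Set.left_mem_Ico.mpr (by linarith : x < x + 1))]
    with w hw
  have h := convexOn_lG.secant_mono (Set.mem_Ioi.mpr hx)
    (Set.mem_Ioi.mpr (lt_trans hx hw.1)) (Set.mem_Ioi.mpr (by linarith [hw.2] : (0:ℝ) < x+1))
    (ne_of_gt hw.1) (by linarith : x + 1 ≠ x) (le_of_lt hw.2)
  rw [slope_def_field]
  calc (lG w - lG x)/(w - x) ≤ (lG (x+1) - lG x)/(x+1-x) := by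
        simpa using h
    _ = Real.log x := by rw [lG_add_one hx]; ring_nf
lemma log_le_psi {x : ℝ} (hx : 1 < x) : Real.log (x-1) ≤ psi x := by
  have hx0 : (0:ℝ) < x := by linarith
  have hslope : Tendsto (slope lG x) (nhdsWithin x (Set.Iio x)) (nhds (psi x)) :=
    (hasDerivAt_iff_tendsto_slope.mp (hasDerivAt_lG hx0)).mono_left
      (nhdsWithin_mono x (fun y hy => Set.mem_compl_singleton_iff.mpr (ne_of_lt hy)))
  refine ge_of_tendsto hslope ?_
  filter_upwards [Ioo_mem_nhdsLT_of_mem (Set.right_mem_Ioc.mpr (by linarith : x - 1 < x))]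
    with w hw
  have h := convexOn_lG.secant_mono (Set.mem_Ioi.mpr hx0)
    (Set.mem_Ioi.mpr (by linarith [hw.1] : (0:ℝ) < x - 1)) (Set.mem_Ioi.mpr (by linarith [hw.1] : (0:ℝ) < w))
    (by linarith : x - 1 ≠ x) (ne_of_lt hw.2) (le_of_lt hw.1)
  rw [slope_def_field]
  calc Real.log (x-1) = (lG x - lG x + Real.log (x-1) * (x - (x-1)))/(x - (x-1)) := by ring_nf
    _ = (lG (x-1) + Real.log (x-1) - lG (x-1) - (lG x - lG x) + lG x - lG x)/(x-(x-1)) := by ring_nf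
    _ = (lG x - lG (x-1))/(x - (x-1)) := by
        rw [show lG x = lG (x-1) + Real.log (x-1) by
          simpa using lG_add_one (by linarith : (0:ℝ) < x - 1)]
        ring_nf
    _ ≤ (lG w - lG x)/(w - x) := by
        have h2 : (lG (x-1) - lG x)/(-1) ≤ (lG w - lG x)/(w - x) := by
          rw [show (-1:ℝ) = x - 1 - x by ring]; exact h
        calc (lG x - lG (x-1))/(x-(x-1)) = (lG (x-1) - lG x)/(-1) := by ring_nf
          _ ≤ (lG w - lG x)/(w - x) := h2

-- === from s3.lean ===
lemma psi_shift {x : ℝ} (hx : 0 < x) (N : ℕ) :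
    psi (x + N) = psi x + ∑ n ∈ Finset.range N, 1/(x+n) := by
  induction N with
  | zero => simp
  | succ N ih =>
      have hxN : 0 < x + N := by positivity
      have : (x + (N+1:ℕ) : ℝ) = (x + N) + 1 := by push_cast; ring
      rw [this, psi_add_one hxN, ih, Finset.sum_range_succ]; ring

lemma log_seq_tendsto_zero {u : ℕ → ℝ} (hu : Tendsto u atTop (nhds 0)) :
    Tendsto (fun n => Real.log (1 + u n)) atTop (nhds 0) := by
  have h1 : Tendsto (fun n => 1 + u n) atTop (nhds 1) := by
    simpa using tendsto_const_nhds.add hu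
  have := (Real.continuousAt_log (by norm_num : (1:ℝ) ≠ 0)).tendsto.comp h1
  rw [Real.log_one] at this
  exact this

lemma tendsto_psi_seq {x : ℝ} (hx : 0 < x) :
    Tendsto (fun N : ℕ => Real.log N - ∑ n ∈ Finset.range N, 1/(x+n)) atTop (nhds (psi x)) := by
  have key : ∀ N : ℕ, Real.log N - ∑ n ∈ Finset.range N, 1/(x+n)
      = psi x - (psi (x + N) - Real.log N) := by
    intro N; rw [psi_shift hx N]; ring
  have h0 : Tendsto (fun N : ℕ => psi (x + N) - Real.log N) atTop (nhds 0) := by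
    have hup : ∀ᶠ N : ℕ in atTop, psi (x + N) - Real.log N ≤ Real.log (1 + x/N) := by
      filter_upwards [eventually_gt_atTop 0] with N hN
      have hNR : (0:ℝ) < N := by exact_mod_cast hN
      have h1 := psi_le_log (by positivity : (0:ℝ) < x + N)
      have : Real.log (x + N) - Real.log N = Real.log (1 + x/N) := by
        rw [← Real.log_div (by positivity) hNR.ne']
        congr 1; field_simp; ring
      linarith [this ▸ sub_le_sub_right h1 (Real.log N)]
    have hlo : ∀ᶠ N : ℕ in atTop, Real.log (1 + (x-1)/N) ≤ psi (x + N) - Real.log N := by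
      filter_upwards [eventually_gt_atTop 1] with N hN
      have hNR : (1:ℝ) < N := by exact_mod_cast hN
      have hx1 : 1 < x + N := by linarith
      have h1 := log_le_psi hx1
      have : Real.log (x + N - 1) - Real.log N = Real.log (1 + (x-1)/N) := by
        rw [← Real.log_div (by linarith) (by linarith : (N:ℝ) ≠ 0)]
        congr 1; field_simp; ring
      linarith [this ▸ sub_le_sub_right h1 (Real.log N)]
    have t1 : Tendsto (fun N : ℕ => Real.log (1 + x/N)) atTop (nhds 0) :=
      log_seq_tendsto_zero (by
        have := tendsto_one_div_atTop_nhds_zero_nat.const_mul x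
        simpa [div_eq_mul_inv, mul_comm] using this)
    have t2 : Tendsto (fun N : ℕ => Real.log (1 + (x-1)/N)) atTop (nhds 0) :=
      log_seq_tendsto_zero (by
        have := tendsto_one_div_atTop_nhds_zero_nat.const_mul (x-1)
        simpa [div_eq_mul_inv, mul_comm] using this)
    exact tendsto_of_tendsto_of_tendsto_of_le_of_le' t2 t1 hlo hup
  have := tendsto_const_nhds.sub h0 (f := fun _ : ℕ => psi x)
  simp only [sub_zero] at this
  simpa only [← key] using this

lemma psi_mono {a b : ℝ} (ha : 0 < a) (hab : a ≤ b) : psi a ≤ psi b := by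
  have hb : 0 < b := lt_of_lt_of_le ha hab
  have hdiff : Tendsto (fun N : ℕ => (Real.log N - ∑ n ∈ Finset.range N, 1/(b+n))
      - (Real.log N - ∑ n ∈ Finset.range N, 1/(a+n))) atTop (nhds (psi b - psi a)) :=
    (tendsto_psi_seq hb).sub (tendsto_psi_seq ha)
  have hnn : ∀ N : ℕ, 0 ≤ (Real.log N - ∑ n ∈ Finset.range N, 1/(b+n))
      - (Real.log N - ∑ n ∈ Finset.range N, 1/(a+n)) := by
    intro N
    have : ∑ n ∈ Finset.range N, 1/(b+n) ≤ ∑ n ∈ Finset.range N, 1/(a+n) := by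
      apply Finset.sum_le_sum
      intro n _
      apply one_div_le_one_div_of_le (by positivity) (by linarith)
    linarith
  have := ge_of_tendsto hdiff (Eventually.of_forall hnn)
  linarith

lemma convexOn_negterm (c : ℝ) (hc : 0 ≤ c) :
    ConvexOn ℝ (Set.Ioi (0:ℝ)) (fun s => -(s/(1+c*s))) := by
  apply convexOn_of_slope_mono_adjacent (convex_Ioi 0)
  intro u v w hu hw huv hvw
  have hu0 : (0:ℝ) < u := hu
  have hv0 : (0:ℝ) < v := lt_trans hu0 huv
  have hw0 : (0:ℝ) < w := hw
  have d1 : (0:ℝ) < 1 + c*u := by positivity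
  have d2 : (0:ℝ) < 1 + c*v := by positivity
  have d3 : (0:ℝ) < 1 + c*w := by positivity
  have e1 : (-(v/(1+c*v)) - -(u/(1+c*u))) / (v - u) = -(1/((1+c*u)*(1+c*v))) := by
    rw [div_eq_iff (by linarith : v - u ≠ 0)]
    field_simp
    ring
  have e2 : (-(w/(1+c*w)) - -(v/(1+c*v))) / (w - v) = -(1/((1+c*v)*(1+c*w))) := by
    rw [div_eq_iff (by linarith : w - v ≠ 0)]
    field_simp
    ring
  rw [e1, e2, neg_le_neg_iff]
  apply div_le_div_of_nonneg_left one_pos.le (by positivity)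
  have : c*u ≤ c*w := by nlinarith
  nlinarith

lemma strictConvexOn_negterm1 :
    StrictConvexOn ℝ (Set.Ioi (0:ℝ)) (fun s => -(s/(1+s))) := by
  apply strictConvexOn_of_slope_strict_mono_adjacent (convex_Ioi 0)
  intro u v w hu hw huv hvw
  have hu0 : (0:ℝ) < u := hu
  have hv0 : (0:ℝ) < v := lt_trans hu0 huv
  have d1 : (0:ℝ) < 1 + u := by positivity
  have d2 : (0:ℝ) < 1 + v := by positivity
  have d3 : (0:ℝ) < 1 + w := by linarith [lt_trans hv0 hvw]
  have e1 : (-(v/(1+v)) - -(u/(1+u))) / (v - u) = -(1/((1+u)*(1+v))) := by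
    rw [div_eq_iff (by linarith : v - u ≠ 0)]
    field_simp
    ring
  have e2 : (-(w/(1+w)) - -(v/(1+v))) / (w - v) = -(1/((1+v)*(1+w))) := by
    rw [div_eq_iff (by linarith : w - v ≠ 0)]
    field_simp
    ring
  rw [e1, e2, neg_lt_neg_iff]
  apply div_lt_div_of_pos_left one_pos (by positivity)
  nlinarith

lemma convexOn_negsum (T : Finset ℕ) :
    ConvexOn ℝ (Set.Ioi (0:ℝ)) (fun s => ∑ n ∈ T, -(s/(1+(n:ℝ)*s))) := by
  classical
  induction T using Finset.induction_on with
  | empty => simpa using convexOn_const (0:ℝ) (convex_Ioi (0:ℝ))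
  | @insert a Tr hn ih =>
      have h1 := (convexOn_negterm (a:ℝ) (by positivity)).add ih
      have heq : (fun s => ∑ n ∈ insert a Tr, -(s/(1+(n:ℝ)*s)))
          = fun s => -(s/(1+(a:ℝ)*s)) + ∑ n ∈ Tr, -(s/(1+(n:ℝ)*s)) := by
        funext s; rw [Finset.sum_insert hn]
      rw [heq]; exact h1

-- === from s4.lean ===
lemma convexOn_limit {S : Set ℝ} (hS : Convex ℝ S) {f : ℕ → ℝ → ℝ} {g : ℝ → ℝ}
    (hf : ∀ N : ℕ, ConvexOn ℝ S (f N))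
    (hlim : ∀ s ∈ S, Tendsto (fun N => f N s) atTop (nhds (g s))) :
    ConvexOn ℝ S g := by
  refine ⟨hS, fun a ha b hb μ ν hμ hν hμν => ?_⟩
  have hmem : μ • a + ν • b ∈ S := hS ha hb hμ hν hμν
  refine le_of_tendsto_of_tendsto' (hlim _ hmem)
    (((hlim a ha).const_mul μ).add ((hlim b hb).const_mul ν)) fun N => ?_
  simpa [smul_eq_mul] using (hf N).2 ha hb hμ hν hμν

lemma tendsto_phi_aux {s : ℝ} (hs : 0 < s) :
    Tendsto (fun N : ℕ => Real.log N - ∑ n ∈ Finset.range N, s/(1+(n:ℝ)*s)) atTop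
      (nhds (psi (1/s))) := by
  have h := tendsto_psi_seq (by positivity : (0:ℝ) < 1/s)
  have : ∀ N : ℕ, (Real.log N - ∑ n ∈ Finset.range N, 1/(1/s+(n:ℝ)))
      = Real.log N - ∑ n ∈ Finset.range N, s/(1+(n:ℝ)*s) := by
    intro N
    congr 1
    apply Finset.sum_congr rfl
    intro n _
    rw [div_eq_div_iff (by positivity) (by positivity)]
    field_simp
  rw [show (fun N : ℕ => Real.log N - ∑ n ∈ Finset.range N, s/(1+(n:ℝ)*s))
      = fun N : ℕ => Real.log N - ∑ n ∈ Finset.range N, 1/(1/s+(n:ℝ)) from funext fun N => (this N).symm]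
  exact h

lemma convexOn_phi2 : ConvexOn ℝ (Set.Ioi (0:ℝ)) (fun s => psi (1/s) + s/(1+s)) := by
  apply convexOn_limit (convex_Ioi 0)
    (f := fun N s => Real.log (N+2:ℕ) + ∑ n ∈ (Finset.range (N+2)).erase 1, -(s/(1+(n:ℝ)*s)))
  · intro N
    exact (convexOn_const _ (convex_Ioi 0)).add (convexOn_negsum _)
  · intro s hs
    have hs0 : (0:ℝ) < s := hs
    have key : ∀ N : ℕ, Real.log (N+2:ℕ) + ∑ n ∈ (Finset.range (N+2)).erase 1, -(s/(1+(n:ℝ)*s))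
        = (Real.log (N+2:ℕ) - ∑ n ∈ Finset.range (N+2), s/(1+(n:ℝ)*s)) + s/(1+s) := by
      intro N
      have h1 : (1:ℕ) ∈ Finset.range (N+2) := by simp only [Finset.mem_range]; omega
      rw [Finset.sum_neg_distrib]
      have := Finset.add_sum_erase _ (fun n : ℕ => s/(1+(n:ℝ)*s)) h1
      push_cast at this ⊢
      rw [show ∑ n ∈ Finset.range (N+2), s/(1+(n:ℝ)*s)
          = s/(1+1*s) + ∑ n ∈ (Finset.range (N+2)).erase 1, s/(1+(n:ℝ)*s) from this.symm]
      rw [one_mul]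
      ring
    have hsub : Tendsto (fun N : ℕ =>
        (Real.log (N+2:ℕ) - ∑ n ∈ Finset.range (N+2), s/(1+(n:ℝ)*s)) + s/(1+s)) atTop
        (nhds (psi (1/s) + s/(1+s))) := by
      exact (((tendsto_phi_aux hs0).comp (tendsto_add_atTop_nat 2)).add tendsto_const_nhds)
    exact Tendsto.congr (fun N => (key N).symm) hsub

lemma strictConvexOn_phi : StrictConvexOn ℝ (Set.Ioi (0:ℝ)) (fun s => psi (1/s)) := by
  have h := convexOn_phi2.add_strictConvexOn strictConvexOn_negterm1
  have heq : (fun s => psi (1/s)) = fun s => (psi (1/s) + s/(1+s)) + -(s/(1+s)) := by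
    funext s; ring
  rw [heq]
  exact h

-- === from s5.lean ===
lemma lG_contOn : ContinuousOn lG (Set.Ioi 0) :=
  fun t ht => ((hasDerivAt_lG ht).continuousAt).continuousWithinAt

lemma lG_intble {a b : ℝ} (ha : 0 < a) (hb : 0 < b) :
    IntervalIntegrable lG volume a b := by
  apply (lG_contOn.mono ?_).intervalIntegrable
  intro t ht
  rcases Set.mem_uIcc.mp ht with h | h
  · exact lt_of_lt_of_le ha h.1
  · exact lt_of_lt_of_le hb h.1

lemma raabe_deriv {x : ℝ} (hx : 0 < x) :
    HasDerivAt (fun y => ∫ t in y..y+1, lG t) (Real.log x) x := by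
  have hG : ∀ y : ℝ, 0 < y → HasDerivAt (fun u => ∫ t in (1:ℝ)..u, lG t) (lG y) y := by
    intro y hy
    exact intervalIntegral.integral_hasDerivAt_right (lG_intble one_pos hy)
      (lG_contOn.stronglyMeasurableAtFilter isOpen_Ioi y hy)
      ((hasDerivAt_lG hy).continuousAt)
  have h1 : HasDerivAt (fun y : ℝ => (∫ t in (1:ℝ)..y+1, lG t) - ∫ t in (1:ℝ)..y, lG t)
      (lG (x+1) - lG x) x := by
    have ha := (hG (x+1) (by linarith)).comp x ((hasDerivAt_id x).add_const 1)
    exact (ha.sub (hG x hx)).congr_deriv (by ring)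
  have heq : (fun y : ℝ => (∫ t in (1:ℝ)..y+1, lG t) - ∫ t in (1:ℝ)..y, lG t)
      =ᶠ[nhds x] (fun y => ∫ t in y..y+1, lG t) := by
    filter_upwards [IsOpen.mem_nhds isOpen_Ioi hx] with y hy
    have hy0 : (0:ℝ) < y := hy
    exact intervalIntegral.integral_interval_sub_left (lG_intble one_pos (by linarith))
      (lG_intble one_pos hy0)
  have h2 := h1.congr_of_eventuallyEq heq.symm
  have : lG (x+1) - lG x = Real.log x := by rw [lG_add_one hx]; ring
  rwa [this] at h2

lemma HH_deriv {x : ℝ} (hx : 0 < x) : HasDerivAt HH 0 x := by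
  have h1 := raabe_deriv hx
  have h2 : HasDerivAt (fun y : ℝ => y * Real.log y - y) (Real.log x) x := by
    have := ((hasDerivAt_id x).mul (Real.hasDerivAt_log hx.ne')).sub (hasDerivAt_id x)
    exact this.congr_deriv (by simp [hx.ne'])
  have := h1.sub h2
  exact this.congr_deriv (by simp)

lemma HH_const {a b : ℝ} (ha : 0 < a) (hab : a < b) : HH b = HH a := by
  have hcont : ContinuousOn HH (Set.Icc a b) := fun t ht =>
    ((HH_deriv (lt_of_lt_of_le ha ht.1)).continuousAt).continuousWithinAt
  obtain ⟨c, _, hc⟩ := exists_hasDerivAt_eq_slope HH (fun _ => (0:ℝ)) hab hcont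
    (fun y hy => HH_deriv (lt_trans ha hy.1))
  have hba : b - a ≠ 0 := by linarith
  have : HH b - HH a = 0 := by
    rw [eq_comm, div_eq_iff hba] at hc
    linarith [hc]
  linarith

-- === from s6.lean ===
-- pointwise chord bound above on [y, y+1]
lemma lG_upper {y t : ℝ} (hy : 0 < y) (ht : t ∈ Set.Icc y (y+1)) :
    lG t ≤ lG y + (t - y) * Real.log y := by
  set l := t - y with hl
  have hl0 : 0 ≤ l := by simp [hl]; linarith [ht.1]
  have hl1 : l ≤ 1 := by simp [hl]; linarith [ht.2]
  have key := convexOn_lG.2 (Set.mem_Ioi.mpr hy) (Set.mem_Ioi.mpr (by linarith : (0:ℝ) < y+1))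
    (by linarith : 0 ≤ 1 - l) hl0 (by ring)
  have harg : (1-l) • y + l • (y+1) = t := by simp [smul_eq_mul]; ring
  rw [harg] at key
  calc lG t ≤ (1-l) * lG y + l * lG (y+1) := key
    _ = lG y + l * Real.log y := by rw [lG_add_one hy]; ring

-- pointwise secant bound below on [y, y+1], for y > 1
lemma lG_lower {y t : ℝ} (hy : 1 < y) (ht : t ∈ Set.Icc y (y+1)) :
    lG y + (t - y) * Real.log (y-1) ≤ lG t := by
  rcases eq_or_lt_of_le ht.1 with h | h
  · simp [← h]
  · have hy0 : (0:ℝ) < y := by linarith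
    have key := convexOn_lG.secant_mono (Set.mem_Ioi.mpr hy0)
      (Set.mem_Ioi.mpr (by linarith : (0:ℝ) < y - 1))
      (Set.mem_Ioi.mpr (by linarith [ht.1] : (0:ℝ) < t))
      (by linarith : y - 1 ≠ y) (ne_of_gt h) (by linarith [ht.1])
    have hlg : lG y = lG (y-1) + Real.log (y-1) := by
      simpa using lG_add_one (by linarith : (0:ℝ) < y - 1)
    have e1 : (lG (y-1) - lG y)/(y - 1 - y) = Real.log (y-1) := by
      rw [hlg]; ring_nf
    rw [e1] at key
    have h2 : Real.log (y-1) * (t - y) ≤ lG t - lG y := by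
      have := (le_div_iff₀ (by linarith : (0:ℝ) < t - y)).mp key
      linarith
    linarith

lemma F_bounds {y : ℝ} (hy : 1 < y) :
    lG y + (1/2) * Real.log (y-1) ≤ (∫ t in y..y+1, lG t) ∧
    (∫ t in y..y+1, lG t) ≤ lG y + (1/2) * Real.log y := by
  have hy0 : (0:ℝ) < y := by linarith
  have hle : y ≤ y + 1 := by linarith
  have hintlG : IntervalIntegrable lG volume y (y+1) := lG_intble hy0 (by linarith)
  have hcont1 : ∀ c : ℝ, IntervalIntegrable (fun t => lG y + (t - y) * c) volume y (y+1) :=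
    fun c => ((by continuity : Continuous _).intervalIntegrable _ _)
  have hval : ∀ c : ℝ, (∫ t in y..y+1, (lG y + (t - y) * c)) = lG y + (1/2) * c := by
    intro c
    rw [intervalIntegral.integral_add ((by continuity : Continuous _).intervalIntegrable _ _)
      ((by continuity : Continuous _).intervalIntegrable _ _)]
    rw [intervalIntegral.integral_const]
    rw [intervalIntegral.integral_mul_const]
    rw [intervalIntegral.integral_sub ((by continuity : Continuous _).intervalIntegrable _ _)
      ((by continuity : Continuous _).intervalIntegrable _ _)]
    rw [integral_id, intervalIntegral.integral_const]
    simp only [smul_eq_mul]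
    ring
  constructor
  · have := intervalIntegral.integral_mono_on hle (hcont1 (Real.log (y-1))) hintlG
      (fun t ht => lG_lower hy ht)
    rw [hval] at this
    linarith
  · have := intervalIntegral.integral_mono_on hle hintlG (hcont1 (Real.log y))
      (fun t ht => lG_upper hy0 ht)
    rw [hval] at this
    linarith

-- === from s7.lean ===
lemma tendsto_log_stirling :
    Tendsto (fun n : ℕ => Real.log (n.factorial : ℝ) - ((n:ℝ)+1/2) * Real.log n + n) atTop
      (nhds ((1/2) * Real.log (2*π))) := by
  have hsp : (0:ℝ) < Real.sqrt π := Real.sqrt_pos.mpr pi_pos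
  have h1 : Tendsto (fun n => Real.log (Stirling.stirlingSeq n)) atTop
      (nhds (Real.log (Real.sqrt π))) :=
    ((Real.continuousAt_log hsp.ne').tendsto).comp Stirling.tendsto_stirlingSeq_sqrt_pi
  have h2 : Tendsto (fun n => Real.log (Stirling.stirlingSeq n) + (1/2) * Real.log 2) atTop
      (nhds (Real.log (Real.sqrt π) + (1/2) * Real.log 2)) := h1.add tendsto_const_nhds
  have hval : Real.log (Real.sqrt π) + (1/2) * Real.log 2 = (1/2) * Real.log (2*π) := by
    rw [Real.log_sqrt pi_pos.le, Real.log_mul two_ne_zero pi_pos.ne']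
    ring
  rw [hval] at h2
  apply h2.congr'
  filter_upwards [eventually_ge_atTop 1] with n hn
  have hn0 : (0:ℝ) < n := by exact_mod_cast hn
  have hfac : (0:ℝ) < ((n.factorial : ℕ) : ℝ) := by exact_mod_cast Nat.factorial_pos n
  have hsq : (0:ℝ) < Real.sqrt (2*n) := Real.sqrt_pos.mpr (by positivity)
  have hpow : (0:ℝ) < ((n:ℝ) / Real.exp 1)^n := by positivity
  unfold Stirling.stirlingSeq
  rw [Real.log_div hfac.ne' (by positivity), Real.log_mul hsq.ne' hpow.ne',
    Real.log_sqrt (by positivity), Real.log_pow, Real.log_div hn0.ne' (Real.exp_pos 1).ne',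
    Real.log_exp, Real.log_mul two_ne_zero hn0.ne']
  ring

lemma HH_eq {x : ℝ} (hx : 0 < x) : HH x = (1/2) * Real.log (2*π) := by
  have hconst : ∀ y : ℝ, 0 < y → HH y = HH 1 := by
    intro y hy
    rcases lt_trichotomy y 1 with h | h | h
    · exact (HH_const hy h).symm
    · rw [h]
    · exact HH_const one_pos h
  have key : ∀ n : ℕ, 2 ≤ n →
      Real.log (n.factorial : ℝ) - ((n:ℝ)+1/2) * Real.log n + n + (1/2)*(Real.log ((n:ℝ)-1) - Real.log n)
        ≤ HH 1 ∧
      HH 1 ≤ Real.log (n.factorial : ℝ) - ((n:ℝ)+1/2) * Real.log n + n := by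
    intro n hn
    have hn1 : (1:ℝ) < n := by exact_mod_cast hn
    have hn0 : (0:ℝ) < n := by linarith
    have hlG : lG n = Real.log (n.factorial : ℝ) - Real.log n := by
      unfold lG
      have hgam : Real.Gamma (n:ℝ) = (((n-1).factorial : ℕ) : ℝ) := by
        have h1 : ((n:ℝ)) = ((n-1 : ℕ):ℝ) + 1 := by
          have h2 : 1 ≤ n := by omega
          push_cast [Nat.cast_sub h2]
          ring
        rw [h1]
        exact Real.Gamma_nat_eq_factorial (n-1)
      rw [hgam]
      have hfac : n.factorial = n * (n-1).factorial := by
        have h3 : n = (n-1) + 1 := by omega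
        conv_lhs => rw [h3]
        rw [Nat.factorial_succ]
        congr 1 <;> omega
      have hone : Real.log (n.factorial : ℝ) = Real.log n + Real.log (((n-1).factorial : ℕ) : ℝ) := by
        rw [← Real.log_mul hn0.ne' (by exact_mod_cast (Nat.factorial_pos (n-1)).ne')]
        congr 1
        rw [hfac]
        push_cast
        ring
      linarith [hone]
    have hF := F_bounds hn1
    have hH : HH 1 = (∫ t in (n:ℝ)..(n:ℝ)+1, lG t) - ((n:ℝ) * Real.log n - n) := by
      rw [← hconst n hn0]; rfl
    constructor
    · rw [hH]
      have := hF.1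
      rw [hlG] at this
      have hcast : Real.log ((n:ℝ)-1) = Real.log ((n:ℝ)-1) := rfl
      nlinarith [this]
    · rw [hH]
      have := hF.2
      rw [hlG] at this
      nlinarith [this]
  have hup : HH 1 ≤ (1/2) * Real.log (2*π) := by
    refine ge_of_tendsto tendsto_log_stirling ?_
    filter_upwards [eventually_ge_atTop 2] with n hn
    exact (key n hn).2
  have hlow : (1/2) * Real.log (2*π) ≤ HH 1 := by
    have ht : Tendsto (fun n : ℕ =>
        Real.log (n.factorial : ℝ) - ((n:ℝ)+1/2) * Real.log n + n + (1/2)*(Real.log ((n:ℝ)-1) - Real.log n))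
        atTop (nhds ((1/2) * Real.log (2*π) + (1/2) * 0)) := by
      apply tendsto_log_stirling.add
      apply Tendsto.const_mul
      have h0 : Tendsto (fun n : ℕ => Real.log (1 + -(1/(n:ℝ)))) atTop (nhds 0) :=
        log_seq_tendsto_zero (by simpa using (tendsto_one_div_atTop_nhds_zero_nat (𝕜 := ℝ)).neg)
      apply h0.congr'
      filter_upwards [eventually_ge_atTop 2] with n hn
      have hn0 : (0:ℝ) < n := by positivity
      have hn1 : (1:ℝ) < n := by exact_mod_cast hn
      rw [← Real.log_div (by linarith) hn0.ne']
      congr 1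
      field_simp
      ring
    rw [show (1:ℝ)/2 * Real.log (2*π) + 1/2 * 0 = 1/2 * Real.log (2*π) by ring] at ht
    refine le_of_tendsto ht ?_
    filter_upwards [eventually_ge_atTop 2] with n hn
    exact (key n hn).1
  have := hconst x hx
  linarith

lemma raabe {x : ℝ} (hx : 0 < x) :
    (∫ t in x..x+1, lG t) = x * Real.log x - x + (1/2) * Real.log (2*π) := by
  have := HH_eq hx
  unfold HH at this
  linarith

-- === from s8.lean ===
lemma psi_intble {x : ℝ} (hx : 0 < x) :
    IntervalIntegrable psi volume x (x+1) := by
  apply MonotoneOn.intervalIntegrable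
  intro a ha b hb hab
  rw [Set.uIcc_of_le (by linarith : x ≤ x+1)] at ha
  exact psi_mono (lt_of_lt_of_le hx ha.1) hab

lemma wpsi_intble {x : ℝ} (hx : 0 < x) :
    IntervalIntegrable (fun t => (x+1-t) * psi t) volume x (x+1) :=
  (psi_intble hx).continuousOn_mul ((continuous_const.sub continuous_id).continuousOn)

lemma parts {x : ℝ} (hx : 0 < x) :
    (∫ t in x..x+1, (x+1-t) * psi t) = x * Real.log x - x + (1/2) * Real.log (2*π) - lG x := by
  have hIcc : Set.uIcc x (x+1) = Set.Icc x (x+1) := Set.uIcc_of_le (by linarith)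
  have hderiv : ∀ t ∈ Set.uIcc x (x+1),
      HasDerivAt (fun t => (x+1-t) * (lG t - lG x))
        ((-1) * (lG t - lG x) + (x+1-t) * psi t) t := by
    intro t ht
    rw [hIcc] at ht
    have ht0 : 0 < t := lt_of_lt_of_le hx ht.1
    have h1 : HasDerivAt (fun t : ℝ => x+1-t) (-1) t := by
      simpa using (hasDerivAt_id t).const_sub (x+1)
    exact h1.mul ((hasDerivAt_lG ht0).sub_const (lG x))
  have hcont : IntervalIntegrable (fun t => (-1) * (lG t - lG x)) volume x (x+1) := by
    apply ContinuousOn.intervalIntegrable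
    rw [hIcc]
    exact (continuousOn_const.mul ((lG_contOn.mono (fun t ht =>
      lt_of_lt_of_le hx ht.1)).sub continuousOn_const))
  have hint : IntervalIntegrable (fun t => (-1) * (lG t - lG x) + (x+1-t) * psi t)
      volume x (x+1) := hcont.add (wpsi_intble hx)
  have hmain := intervalIntegral.integral_eq_sub_of_hasDerivAt hderiv hint
  simp only [add_sub_cancel_left, sub_self, mul_zero, zero_mul, sub_zero] at hmain
  have hsplit : (∫ t in x..x+1, ((-1) * (lG t - lG x) + (x+1-t) * psi t))
      = (∫ t in x..x+1, (-1) * (lG t - lG x)) + (∫ t in x..x+1, (x+1-t) * psi t) :=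
    intervalIntegral.integral_add hcont (wpsi_intble hx)
  have hfirst : (∫ t in x..x+1, (-1) * (lG t - lG x))
      = -((∫ t in x..x+1, lG t) - lG x) := by
    rw [intervalIntegral.integral_const_mul]
    rw [intervalIntegral.integral_sub (lG_intble hx (by linarith)) intervalIntegrable_const]
    rw [intervalIntegral.integral_const]
    simp
  rw [hsplit, hfirst] at hmain
  rw [raabe hx] at hmain
  linarith [hmain]

lemma weight_one {x : ℝ} : (∫ t in x..x+1, 2*(x+1-t)) = 1 := by
  rw [intervalIntegral.integral_const_mul]
  rw [intervalIntegral.integral_sub ((by continuity : Continuous fun _ : ℝ => x+1).intervalIntegrable _ _)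
    ((by continuity : Continuous fun t : ℝ => t).intervalIntegrable _ _)]
  rw [intervalIntegral.integral_const, integral_id]
  simp only [smul_eq_mul]
  ring

lemma weight_u {x : ℝ} (hx : 0 < x) :
    (∫ t in x..x+1, 2*(x+1-t) * (1/t)) = 2*((x+1) * Real.log (1+1/x) - 1) := by
  have h0 : (0:ℝ) ∉ Set.uIcc x (x+1) := by
    rw [Set.uIcc_of_le (by linarith)]
    intro h
    exact absurd h.1 (by linarith)
  have hlog : (∫ t in x..x+1, 1/t) = Real.log (1+1/x) := by
    rw [integral_one_div h0]
    congr 1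
    field_simp
  have hcong : (∫ t in x..x+1, 2*(x+1-t) * (1/t))
      = ∫ t in x..x+1, ((2*(x+1)) * (1/t) - 2) := by
    apply intervalIntegral.integral_congr
    intro t ht
    have ht0 : 0 < t := by
      rw [Set.uIcc_of_le (by linarith : x ≤ x+1)] at ht
      exact lt_of_lt_of_le hx ht.1
    field_simp
  rw [hcong]
  have hintinv : IntervalIntegrable (fun t => 1/t) volume x (x+1) := by
    apply ContinuousOn.intervalIntegrable
    intro t ht
    have ht0 : 0 < t := by
      rw [Set.uIcc_of_le (by linarith : x ≤ x+1)] at ht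
      exact lt_of_lt_of_le hx ht.1
    exact (continuousAt_const.div continuousAt_id ht0.ne').continuousWithinAt
  rw [intervalIntegral.integral_sub (hintinv.const_mul _) intervalIntegrable_const]
  rw [intervalIntegral.integral_const_mul, hlog, intervalIntegral.integral_const]
  simp only [smul_eq_mul]
  ring

-- === from s9.lean ===
theorem key_ineq (x : ℝ) (hx : 0 < x) :
    psi (δ x) < 2 * (x * Real.log x - x + (1/2) * Real.log (2*π) - lG x) := by
  set I : Set ℝ := Set.Ioc x (x+1) with hI
  have hwRcont : Continuous (fun t : ℝ => 2*(x+1-t)) :=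
    continuous_const.mul (continuous_const.sub continuous_id)
  set w : ℝ → NNReal := fun t => Real.toNNReal (2*(x+1-t)) with hw
  have hwmeas : Measurable w := measurable_real_toNNReal.comp hwRcont.measurable
  set μ0 : Measure ℝ := volume.restrict I with hμ0
  set ν : Measure ℝ := μ0.withDensity (fun t => (w t : ENNReal)) with hν
  have hcoe : ∀ t ∈ I, ((w t : ℝ)) = 2*(x+1-t) := by
    intro t ht
    apply Real.coe_toNNReal
    nlinarith [ht.2]
  have hIoc_eq : ∀ f : ℝ → ℝ, (∫ t in x..x+1, f t) = ∫ t in I, f t := fun f =>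
    intervalIntegral.integral_of_le (by linarith)
  have htoIoc : ∀ f : ℝ → ℝ, IntervalIntegrable f volume x (x+1) → IntegrableOn f I volume := by
    intro f hf
    have := (intervalIntegrable_iff (μ := volume)).mp hf
    rwa [Set.uIoc_of_le (by linarith : x ≤ x+1)] at this
  have hint_eq : ∀ g : ℝ → ℝ, (∫ t, g t ∂ν) = ∫ t in I, 2*(x+1-t) * g t := by
    intro g
    rw [hν, integral_withDensity_eq_integral_smul hwmeas g, hμ0]
    apply setIntegral_congr_fun measurableSet_Ioc
    intro t ht
    show w t • g t = 2 * (x + 1 - t) * g t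
    rw [NNReal.smul_def, smul_eq_mul, hcoe t ht]
  have hInt_transfer : ∀ g : ℝ → ℝ, IntegrableOn (fun t => 2*(x+1-t) * g t) I volume →
      Integrable g ν := by
    intro g hg
    rw [hν, integrable_withDensity_iff_integrable_smul hwmeas]
    apply hg.congr
    rw [EventuallyEq, ae_restrict_iff' measurableSet_Ioc]
    filter_upwards with t ht
    show 2 * (x + 1 - t) * g t = w t • g t
    rw [NNReal.smul_def, smul_eq_mul, hcoe t ht]
  -- probability measure
  have hwcont : Continuous (fun t => (w t : ℝ)) := by
    simp only [hw, Real.coe_toNNReal']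
    exact hwRcont.max continuous_const
  have hwint : Integrable (fun t => (w t : ℝ)) μ0 := by
    rw [hμ0]
    exact hwcont.integrableOn_Ioc
  have hν_univ : ν Set.univ = 1 := by
    rw [hν, withDensity_apply _ MeasurableSet.univ, Measure.restrict_univ,
      lintegral_coe_eq_integral w hwint]
    have h1 : (∫ t, (w t : ℝ) ∂μ0) = 1 := by
      rw [hμ0]
      have h2 : (∫ t in I, (w t : ℝ)) = ∫ t in I, 2*(x+1-t) :=
        setIntegral_congr_fun measurableSet_Ioc (fun t ht => hcoe t ht)
      rw [h2, ← hIoc_eq]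
      exact weight_one
    rw [h1]
    simp
  haveI hprob : IsProbabilityMeasure ν := ⟨hν_univ⟩
  set u : ℝ → ℝ := fun t => 1/t with hu
  have hfi : Integrable u ν := by
    apply hInt_transfer
    apply htoIoc
    apply ContinuousOn.intervalIntegrable
    apply ContinuousOn.mul hwRcont.continuousOn
    intro t ht
    rw [Set.uIcc_of_le (by linarith : x ≤ x+1)] at ht
    have ht0 : 0 < t := lt_of_lt_of_le hx ht.1
    exact (continuousAt_const.div continuousAt_id ht0.ne').continuousWithinAt
  have hwpsiIntOn : IntegrableOn (fun t => 2*(x+1-t) * psi t) I volume := by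
    have h1 := (wpsi_intble hx).const_mul 2
    have h2 : (fun t => 2*((x+1-t) * psi t)) = fun t => 2*(x+1-t) * psi t := by
      funext t; ring
    rw [h2] at h1
    exact htoIoc _ h1
  have hgi : Integrable ((fun s => psi (1/s)) ∘ u) ν := by
    apply hInt_transfer
    apply hwpsiIntOn.congr_fun ?_ measurableSet_Ioc
    intro t ht
    have ht0 : 0 < t := lt_trans hx ht.1
    simp only [Function.comp, hu, one_div_one_div]
  have hfs : ∀ᵐ t ∂ν, u t ∈ Set.Icc (1/(x+1)) (1/x) := by
    have h0 : ∀ᵐ t ∂μ0, u t ∈ Set.Icc (1/(x+1)) (1/x) := by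
      rw [hμ0]
      filter_upwards [ae_restrict_mem measurableSet_Ioc] with t ht
      have ht0 : 0 < t := lt_trans hx ht.1
      constructor
      · exact one_div_le_one_div_of_le ht0 ht.2
      · exact le_of_lt (one_div_lt_one_div_of_lt hx ht.1)
    exact h0.filter_mono (withDensity_absolutelyContinuous μ0 _).ae_le
  have hsub : Set.Icc (1/(x+1)) (1/x) ⊆ Set.Ioi (0:ℝ) := fun a ha =>
    lt_of_lt_of_le (by positivity) ha.1
  have hstrict := strictConvexOn_phi.subset hsub (convex_Icc _ _)
  have hcont := (strictConvexOn_phi.convexOn.continuousOn isOpen_Ioi).mono hsub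
  rcases hstrict.ae_eq_const_or_map_average_lt hcont isClosed_Icc hfs hfi hgi with hconst | hlt
  · -- impossible: u is not a.e. constant
    exfalso
    set c : ℝ := ⨍ t, u t ∂ν with hc
    have hne : ν {t | ¬ (u t = c)} = 0 := by
      have := hconst
      rw [EventuallyEq] at this
      exact (ae_iff).mp this
    set A : Set ℝ := Set.Ioc x (x+1/2) \ {1/c} with hA
    have hAmeas : MeasurableSet A := measurableSet_Ioc.diff (measurableSet_singleton _)
    have hAsub : A ⊆ {t | ¬ (u t = c)} := by
      intro t ht
      simp only [Set.mem_setOf_eq]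
      intro h
      apply ht.2
      have ht0 : 0 < t := lt_trans hx ht.1.1
      have hc0 : c ≠ 0 := by
        rw [← h, hu]
        positivity
      rw [Set.mem_singleton_iff]
      rw [hu] at h
      field_simp at h
      field_simp
      linarith [h]
    have hA0 : ν A = 0 := measure_mono_null hAsub hne
    have hAI : A ⊆ I := by
      intro t ht
      exact ⟨ht.1.1, le_trans ht.1.2 (by linarith)⟩
    have hge : ENNReal.ofReal (1/2) ≤ ν A := by
      rw [hν, withDensity_apply _ hAmeas, hμ0, Measure.restrict_restrict hAmeas,
        Set.inter_eq_self_of_subset_left hAI]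
      calc ENNReal.ofReal (1/2) = volume A := by
            rw [hA, measure_diff_null (measure_singleton _), Real.volume_Ioc]
            congr 1
            ring
        _ = ∫⁻ _ in A, 1 ∂volume := (setLIntegral_one A).symm
        _ ≤ ∫⁻ t in A, (w t : ENNReal) ∂volume := by
            apply setLIntegral_mono (by exact hwmeas.coe_nnreal_ennreal)
            intro t ht
            have h1 : (1:ℝ) ≤ (w t : ℝ) := by
              rw [hcoe t (hAI ht)]
              have := ht.1.2
              linarith
            have : (1:NNReal) ≤ w t := by exact_mod_cast h1
            exact_mod_cast this
    rw [hA0] at hge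
    norm_num at hge
  · rw [average_eq_integral, average_eq_integral] at hlt
    have h1 : (∫ t, u t ∂ν) = 2*((x+1) * Real.log (1+1/x) - 1) := by
      rw [hint_eq, ← hIoc_eq]
      exact weight_u hx
    have h2 : (∫ t, psi (1 / u t) ∂ν)
        = 2 * (x * Real.log x - x + (1/2) * Real.log (2*π) - lG x) := by
      rw [hint_eq]
      have h3 : (∫ t in I, 2*(x+1-t) * psi (1 / u t))
          = ∫ t in I, 2*((x+1-t) * psi t) := by
        apply setIntegral_congr_fun measurableSet_Ioc
        intro t ht
        have ht0 : 0 < t := lt_trans hx ht.1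
        simp only [hu, one_div_one_div]
        ring
      rw [h3, ← hIoc_eq, intervalIntegral.integral_const_mul, parts hx]
    rw [h1, h2] at hlt
    have hdelta : (1:ℝ)/(2*((x+1) * Real.log (1+1/x) - 1)) = δ x := by
      unfold δ
      rw [one_div, mul_inv, ← one_div]
      ring
    calc psi (δ x) = psi (1/(2*((x+1) * Real.log (1+1/x) - 1))) := by rw [hdelta]
      _ < 2 * (x * Real.log x - x + (1/2) * Real.log (2*π) - lG x) := hlt

-- === from s10.lean ===
theorem stmt_1 (x : ℝ) (hx : 0 < x) :
    Real.Gamma x / (x ^ x * Real.exp (-x) * Real.sqrt (2 * Real.pi)) <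
      Real.exp (-(1/2) * psi (δ x)) := by
  have hGpos := Real.Gamma_pos_of_pos hx
  have hD : x ^ x * Real.exp (-x) * Real.sqrt (2 * Real.pi)
      = Real.exp (x * Real.log x - x + (1/2) * Real.log (2*π)) := by
    rw [show x * Real.log x - x + (1/2) * Real.log (2*π)
        = x * Real.log x + (-x) + (1/2) * Real.log (2*π) by ring,
      Real.exp_add, Real.exp_add]
    congr 1
    · congr 1
      rw [Real.rpow_def_of_pos hx]
      ring_nf
    · rw [show (2:ℝ) * Real.pi = 2*π from rfl]
      rw [Real.sqrt_eq_rpow, Real.rpow_def_of_pos (by positivity)]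
      congr 1
      ring
  rw [hD, div_lt_iff₀ (Real.exp_pos _), ← Real.exp_add]
  rw [show Real.Gamma x = Real.exp (lG x) from (Real.exp_log hGpos).symm]
  apply Real.exp_lt_exp.mpr
  have := key_ineq x hx
  linarith
end

section
/- The function f(u) = (1/2)/((u+1)·log(u+1) − (u+1)·log u − 1) − u is strictly increasing on (0, ∞). -/
open Real

private lemma master (α a b c d e f g : ℝ) (t : ℝ) :
    HasDerivAt (fun x : ℝ => α * Real.exp (3*x) + (a*x^2 + b*x + c) * Real.exp (2*x)
      + (d*x + e) * Real.exp x + (f*x + g))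
    (3*α * Real.exp (3*t) + (2*a*t^2 + (2*a+2*b)*t + (b+2*c)) * Real.exp (2*t)
      + (d*t + (d+e)) * Real.exp t + f) t := by
  have e1 : HasDerivAt (fun x : ℝ => Real.exp x) (Real.exp t) t := Real.hasDerivAt_exp t
  have e2 : HasDerivAt (fun x : ℝ => Real.exp (2*x)) (Real.exp (2*t) * 2) t := by
    simpa using HasDerivAt.exp (by simpa using (hasDerivAt_id t).const_mul (2:ℝ))
  have e3 : HasDerivAt (fun x : ℝ => Real.exp (3*x)) (Real.exp (3*t) * 3) t := by
    simpa using HasDerivAt.exp (by simpa using (hasDerivAt_id t).const_mul (3:ℝ))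
  have p2 : HasDerivAt (fun x : ℝ => a*x^2 + b*x + c) (2*a*t + b) t := by
    have h := (((hasDerivAt_pow 2 t).const_mul a).add ((hasDerivAt_id t).const_mul b)).add_const c
    refine h.congr_deriv ?_
    push_cast; ring
  have p1 : HasDerivAt (fun x : ℝ => d*x + e) d t := by
    have h := ((hasDerivAt_id t).const_mul d).add_const e
    simpa using h
  have p0 : HasDerivAt (fun x : ℝ => f*x + g) f t := by
    have h := ((hasDerivAt_id t).const_mul f).add_const g
    simpa using h
  have h := (((e3.const_mul α).add (p2.mul e2)).add (p1.mul e1)).add p0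
  refine h.congr_deriv ?_
  ring

private lemma cascade {f f' : ℝ → ℝ} (h0 : f 0 = 0)
    (hd : ∀ t, HasDerivAt f (f' t) t) (hp : ∀ t, 0 < t → 0 < f' t) :
    ∀ t, 0 < t → 0 < f t := by
  intro t ht
  have hmono : StrictMonoOn f (Set.Ici 0) := by
    apply strictMonoOn_of_deriv_pos (convex_Ici 0)
    · exact fun x _ => (hd x).continuousAt.continuousWithinAt
    · intro x hx
      rw [interior_Ici] at hx
      rw [(hd x).deriv]
      exact hp x hx
  have := hmono Set.self_mem_Ici (Set.mem_Ici.2 ht.le) ht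
  simpa [h0] using this

private lemma F6pos : ∀ t : ℝ, 0 < t →
    0 < 729 * Real.exp (3*t) + (-128*t^2 + -576*t + -704) * Real.exp (2*t)
      + (-2*t + -5) * Real.exp t + (0*t + 0) := by
  intro t ht
  have hy1 : 1 + t ≤ Real.exp t := by linarith [Real.add_one_le_exp t]
  have hy3 : (1 + t/3)^3 ≤ Real.exp t := by
    have h := Real.add_one_le_exp (t/3)
    have h3 : (1 + t/3) ≥ 0 := by nlinarith
    calc (1 + t/3)^3 ≤ (Real.exp (t/3))^3 := by
          apply pow_le_pow_left₀ h3 (by linarith [h]) 3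
      _ = Real.exp t := by
          rw [← Real.exp_nat_mul]; congr 1; push_cast; ring
  have hypos : 0 < Real.exp t := Real.exp_pos t
  have h2 : Real.exp (2*t) = Real.exp t * Real.exp t := by
    rw [show (2:ℝ)*t = t + t by ring, Real.exp_add]
  have h3 : Real.exp (3*t) = Real.exp t * (Real.exp t * Real.exp t) := by
    rw [show (3:ℝ)*t = t + (t + t) by ring, Real.exp_add, Real.exp_add]
  rw [h2, h3]
  set y := Real.exp t with hy
  have key : (128*t^2 + 576*t + 704 + (27*t^3 + 115*t^2 + 153*t + 25)) ≤ 729 * y := by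
    nlinarith [hy3]
  nlinarith [mul_le_mul_of_nonneg_right key (mul_nonneg hypos.le hypos.le),
    mul_le_mul_of_nonneg_left hy1 (le_of_lt hypos), ht, hypos,
    mul_pos (mul_pos hypos hypos) ht, mul_pos hypos ht]

private lemma F0pos : ∀ t : ℝ, 0 < t →
    0 < 1 * Real.exp (3*t) + (-2*t^2 + 3*t + -5) * Real.exp (2*t)
      + (-2*t + 7) * Real.exp t + (-1*t + -3) := by
  have h5 : ∀ t : ℝ, 0 < t →
      0 < 243 * Real.exp (3*t) + (-64*t^2 + -224*t + -240) * Real.exp (2*t)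
        + (-2*t + -3) * Real.exp t + (0*t + 0) := by
    refine cascade ?_ ?_ F6pos
    · norm_num
    · intro t
      have h := master 243 (-64) (-224) (-240) (-2) (-3) 0 0 t
      convert h using 1; ring
  have h4 : ∀ t : ℝ, 0 < t →
      0 < 81 * Real.exp (3*t) + (-32*t^2 + -80*t + -80) * Real.exp (2*t)
        + (-2*t + -1) * Real.exp t + (0*t + 0) := by
    refine cascade ?_ ?_ h5
    · norm_num
    · intro t
      have h := master 81 (-32) (-80) (-80) (-2) (-1) 0 0 t
      convert h using 1; ring
  have h3 : ∀ t : ℝ, 0 < t →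
      0 < 27 * Real.exp (3*t) + (-16*t^2 + -24*t + -28) * Real.exp (2*t)
        + (-2*t + 1) * Real.exp t + (0*t + 0) := by
    refine cascade ?_ ?_ h4
    · norm_num
    · intro t
      have h := master 27 (-16) (-24) (-28) (-2) 1 0 0 t
      convert h using 1; ring
  have h2 : ∀ t : ℝ, 0 < t →
      0 < 9 * Real.exp (3*t) + (-8*t^2 + -4*t + -12) * Real.exp (2*t)
        + (-2*t + 3) * Real.exp t + (0*t + 0) := by
    refine cascade ?_ ?_ h3
    · norm_num
    · intro t
      have h := master 9 (-8) (-4) (-12) (-2) 3 0 0 t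
      convert h using 1; ring
  have h1 : ∀ t : ℝ, 0 < t →
      0 < 3 * Real.exp (3*t) + (-4*t^2 + 2*t + -7) * Real.exp (2*t)
        + (-2*t + 5) * Real.exp t + (0*t + -1) := by
    refine cascade ?_ ?_ h2
    · norm_num
    · intro t
      have h := master 3 (-4) 2 (-7) (-2) 5 0 (-1) t
      convert h using 1; ring
  refine cascade ?_ ?_ h1
  · norm_num
  · intro t
    have h := master 1 (-2) 3 (-5) (-2) 7 (-1) (-3) t
    convert h using 1; ring

theorem stmt_4 :
    StrictMonoOn (fun u : ℝ =>
      (1/2) / ((u + 1) * Real.log (u + 1) - (u + 1) * Real.log u - 1) - u)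
      (Set.Ioi 0) := by
  have main : ∀ u : ℝ, 0 < u → ∃ dv : ℝ,
      HasDerivAt (fun u : ℝ =>
        (1/2) / ((u + 1) * Real.log (u + 1) - (u + 1) * Real.log u - 1) - u) dv u ∧ 0 < dv := by
    intro u hu
    have hu1 : (0:ℝ) < u + 1 := by linarith
    set L : ℝ := Real.log (u + 1) - Real.log u with hLdef
    -- L > 0
    have hLpos : 0 < L := by
      have := Real.log_lt_log hu (by linarith : u < u + 1)
      simp [hLdef]; linarith
    -- g > 0
    have hglow : Real.log u - Real.log (u+1) < u/(u+1) - 1 := by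
      have h := Real.log_lt_sub_one_of_pos (by positivity : (0:ℝ) < u/(u+1))
        (ne_of_lt (by rw [div_lt_one hu1]; linarith))
      rwa [Real.log_div hu.ne' hu1.ne'] at h
    have haux : (u+1) * (u/(u+1)) = u := by field_simp
    have hgpos : 0 < (u + 1) * Real.log (u + 1) - (u + 1) * Real.log u - 1 := by
      nlinarith [mul_lt_mul_of_pos_left hglow hu1]
    -- L < 1/u
    have hLup : L < 1/u := by
      have h := Real.log_lt_sub_one_of_pos (by positivity : (0:ℝ) < (u+1)/u)
        (ne_of_gt ((one_lt_div hu).mpr (by linarith)))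
      rw [Real.log_div hu1.ne' hu.ne'] at h
      have : (u+1)/u - 1 = 1/u := by field_simp; ring
      rw [this] at h
      exact h
    -- derivative of denominator
    have hlog1 : HasDerivAt (fun u : ℝ => Real.log (u + 1)) (1/(u+1)) u := by
      have h := HasDerivAt.log ((hasDerivAt_id u).add_const 1) hu1.ne'
      simpa using h
    have hlog2 : HasDerivAt Real.log u⁻¹ u := Real.hasDerivAt_log hu.ne'
    have hG : HasDerivAt (fun u : ℝ => (u + 1) * Real.log (u + 1) - (u + 1) * Real.log u - 1)
        ((1 * Real.log (u+1) + (u+1) * (1/(u+1))) - (1 * Real.log u + (u+1) * u⁻¹)) u := by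
      have ha := ((hasDerivAt_id u).add_const 1).mul hlog1
      have hb := ((hasDerivAt_id u).add_const 1).mul hlog2
      exact (ha.sub hb).sub_const 1
    set g' : ℝ := (1 * Real.log (u+1) + (u+1) * (1/(u+1))) - (1 * Real.log u + (u+1) * u⁻¹)
      with hg'def
    have hF : HasDerivAt (fun u : ℝ =>
        (1/2) / ((u + 1) * Real.log (u + 1) - (u + 1) * Real.log u - 1) - u)
        ((0 * ((u + 1) * Real.log (u + 1) - (u + 1) * Real.log u - 1) - 1/2 * g')
          / ((u + 1) * Real.log (u + 1) - (u + 1) * Real.log u - 1)^2 - 1) u := by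
      have hdiv := (hasDerivAt_const u (1/2 : ℝ)).div hG hgpos.ne'
      exact hdiv.sub (hasDerivAt_id u)
    refine ⟨_, hF, ?_⟩
    -- positivity of the derivative
    have hexpL : Real.exp L = (u+1)/u := by
      rw [hLdef, Real.exp_sub, Real.exp_log hu1, Real.exp_log hu]
    have hF0 := F0pos L hLpos
    have hexp2 : Real.exp (2*L) = ((u+1)/u)^2 := by
      rw [show (2:ℝ)*L = L + L by ring, Real.exp_add, hexpL]; ring
    have hexp3 : Real.exp (3*L) = ((u+1)/u)^3 := by
      rw [show (3:ℝ)*L = L + (L + L) by ring, Real.exp_add, Real.exp_add, hexpL]; ring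
    rw [hexp2, hexp3] at hF0
    have hA : 0 < 1 - u*L - 2*u*((u+1)*L - 1)^2 := by
      have e : 1 * ((u+1)/u)^3 + (-2*L^2 + 3*L + -5) * ((u+1)/u)^2
          + (-2*L + 7) * (Real.exp L) + (-1*L + -3)
          = (1 - u*L - 2*u*((u+1)*L - 1)^2) / u^3 := by
        rw [hexpL]; field_simp; ring
      rw [e] at hF0
      rcases div_pos_iff.mp hF0 with ⟨h, _⟩ | ⟨_, h⟩
      · exact h
      · nlinarith [pow_pos hu 3]
    have hfin : ((u+1)*L - 1)^2 < (1 - u*L)/(2*u) := by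
      rw [lt_div_iff₀ (by positivity : (0:ℝ) < 2*u)]
      nlinarith [hA]
    have haux1 : (u+1) * (1/(u+1)) = 1 := by field_simp
    have haux2 : (u+1) * u⁻¹ = 1 + 1/u := by field_simp
    have haux3 : (1 - u*L)/(2*u) = 1/2 * (1/u - L) := by field_simp
    rw [haux3] at hfin
    have haux4 : u * (1/u) = 1 := by field_simp
    rw [sub_pos, hg'def]
    rw [lt_div_iff₀ (by positivity : (0:ℝ) <
      ((u + 1) * Real.log (u + 1) - (u + 1) * Real.log u - 1)^2)]
    simp only [hLdef] at hfin
    nlinarith [hfin, haux1, haux2]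
  apply strictMonoOn_of_deriv_pos (convex_Ioi 0)
  · intro u hu
    obtain ⟨d, hd, _⟩ := main u hu
    exact hd.continuousAt.continuousWithinAt
  · intro u hu
    rw [interior_Ioi] at hu
    obtain ⟨d, hd, hdpos⟩ := main u hu
    rw [hd.deriv]
    exact hdpos
end

section
/- For all t > 0, h(t) := t²·log(t+1) − t³ + 2·((t+1)·log(t+1) − t)² < 0. -/
open Real Set

/-- For y > 1, 2 log y < y - 1/y. -/
lemma aux_two_log_lt (y : ℝ) (hy : 1 < y) : 2 * Real.log y < y - y⁻¹ := by
  set f : ℝ → ℝ := fun y => y - y⁻¹ - 2 * Real.log y with hf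
  have hderiv : ∀ x ∈ interior (Set.Ici (1:ℝ)), HasDerivAt f (1 + x⁻¹^2 - 2 * x⁻¹) x := by
    intro x hx
    rw [interior_Ici] at hx
    have hx0 : (0:ℝ) < x := lt_trans one_pos hx
    have h1 : HasDerivAt (fun y : ℝ => y⁻¹) (-(x^2)⁻¹) x := by
      simpa using hasDerivAt_inv hx0.ne'
    have h2 : HasDerivAt Real.log x⁻¹ x := Real.hasDerivAt_log hx0.ne'
    have h3 := ((hasDerivAt_id x).sub h1).sub (h2.const_mul 2)
    refine h3.congr_deriv ?_
    have : (x:ℝ) ≠ 0 := hx0.ne'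
    field_simp
    ring
  have hmono : StrictMonoOn f (Set.Ici 1) := by
    apply strictMonoOn_of_deriv_pos (convex_Ici 1)
    · intro x hx
      have hx0 : (0:ℝ) < x := lt_of_lt_of_le one_pos hx
      exact (((hasDerivAt_id x).sub
        (by simpa using hasDerivAt_inv hx0.ne')).sub
        ((Real.hasDerivAt_log hx0.ne').const_mul 2)).continuousAt.continuousWithinAt
    · intro x hx
      rw [(hderiv x hx).deriv]
      rw [interior_Ici] at hx
      have hx0 : (0:ℝ) < x := lt_trans one_pos hx
      have hx1 : (1:ℝ) < x := hx
      have hd : (0:ℝ) < (x - 1)^2 / x^2 :=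
        div_pos (pow_pos (by linarith) 2) (pow_pos hx0 2)
      have heq : (x - 1)^2 / x^2 = 1 + x⁻¹^2 - 2*x⁻¹ := by
        field_simp
        ring
      linarith [heq ▸ hd]
  have h01 : f 1 < f y := hmono (Set.self_mem_Ici) (Set.mem_Ici.mpr hy.le) hy
  simp only [hf, Real.log_one] at h01
  norm_num at h01
  linarith

/-- Key inequality: log(x+1)^2 * (x+1) < x^2 for x > 0. -/
lemma aux_log_sq (x : ℝ) (hx : 0 < x) : Real.log (x+1) ^ 2 * (x+1) < x^2 := by
  have hx1 : (0:ℝ) < x + 1 := by linarith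
  set y := Real.sqrt (x+1) with hy
  have hysq : y^2 = x + 1 := Real.sq_sqrt hx1.le
  have hynn : 0 ≤ y := Real.sqrt_nonneg _
  have hy1 : 1 < y := by nlinarith
  have hy0 : 0 < y := lt_trans one_pos hy1
  have hlog : Real.log (x+1) = 2 * Real.log y := by
    rw [hy, Real.log_sqrt hx1.le]; ring
  have h2 := aux_two_log_lt y hy1
  have hstep : Real.log (x+1) < x / y := by
    rw [hlog]
    have heq : y - y⁻¹ = x / y := by
      field_simp
      nlinarith
    linarith [heq ▸ h2]
  have hlogpos : 0 < Real.log (x+1) := Real.log_pos (by linarith)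
  have hxy : 0 < x / y := div_pos hx hy0
  have hsq : Real.log (x+1)^2 < (x/y)^2 := by nlinarith
  have hq : (x/y)^2 = x^2/(x+1) := by rw [div_pow, hysq]
  rw [hq] at hsq
  calc Real.log (x+1)^2 * (x+1) < x^2/(x+1) * (x+1) :=
        mul_lt_mul_of_pos_right hsq hx1
    _ = x^2 := by field_simp

theorem stmt_6 (t : ℝ) (ht : 0 < t) :
    t^2 * Real.log (t + 1) - t^3 + 2 * ((t + 1) * Real.log (t + 1) - t)^2 < 0 := by
  set K : ℝ → ℝ := fun s => s - Real.log (s+1) - 2 * ((s+1) * Real.log (s+1) - s)^2 / s^2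
    with hK
  -- derivative of K at any s > 0
  have hasD : ∀ s : ℝ, 0 < s → HasDerivAt K
      (1 - 1/(s+1) - (2*(2*((s+1)*Real.log (s+1) - s)*Real.log (s+1)) * s^2
        - 2*((s+1)*Real.log (s+1) - s)^2 * (2*s)) / (s^2)^2) s := by
    intro s hs
    have hs1 : (0:ℝ) < s + 1 := by linarith
    have hL : HasDerivAt (fun u : ℝ => Real.log (u+1)) (1/(s+1)) s := by
      have := (Real.hasDerivAt_log hs1.ne').comp s (((hasDerivAt_id s).add_const 1))
      simpa [Function.comp_def] using this
    have hB : HasDerivAt (fun u : ℝ => (u+1) * Real.log (u+1) - u) (Real.log (s+1)) s := by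
      have hb := (((hasDerivAt_id s).add_const 1).mul hL).sub (hasDerivAt_id s)
      refine hb.congr_deriv ?_
      field_simp
      simp
    have hN : HasDerivAt (fun u : ℝ => 2*((u+1) * Real.log (u+1) - u)^2)
        (2*(2*((s+1)*Real.log (s+1) - s)*Real.log (s+1))) s := by
      have hn := (hB.pow 2).const_mul 2
      refine hn.congr_deriv ?_
      ring
    have hden : HasDerivAt (fun u : ℝ => u^2) (2*s) s := by
      simpa using hasDerivAt_pow 2 s
    have hdiv := hN.div hden (by positivity)
    exact ((hasDerivAt_id s).sub hL).sub hdiv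
  -- derivative is positive
  have hpos : ∀ s : ℝ, 0 < s → 0 < (1 - 1/(s+1) - (2*(2*((s+1)*Real.log (s+1) - s)*Real.log (s+1)) * s^2
        - 2*((s+1)*Real.log (s+1) - s)^2 * (2*s)) / (s^2)^2) := by
    intro s hs
    have hs1 : (0:ℝ) < s + 1 := by linarith
    set L := Real.log (s+1) with hLdef
    set B := (s+1)*L - s with hBdef
    have key : L^2 * (s+1) < s^2 := aux_log_sq s hs
    have hkey : 0 < s^4 - 4*s*B*L*(s+1) + 4*B^2*(s+1) := by
      nlinarith [mul_nonneg hs1.le (sq_nonneg (2*B - s*L)),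
        mul_pos (mul_pos hs hs) (show (0:ℝ) < s^2 - L^2*(s+1) by linarith)]
    rw [show (1 - 1/(s+1) - (2*(2*B*L) * s^2 - 2*B^2 * (2*s)) / (s^2)^2)
        = (s^4 - 4*s*B*L*(s+1) + 4*B^2*(s+1)) / (s^3 * (s+1)) by field_simp; ring]
    positivity
  -- K strictly monotone on Ioi 0
  have hmono : StrictMonoOn K (Set.Ioi 0) := by
    apply strictMonoOn_of_deriv_pos (convex_Ioi 0)
    · exact fun x hx => (hasD x hx).continuousAt.continuousWithinAt
    · intro x hx
      rw [interior_Ioi] at hx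
      rw [(hasD x hx).deriv]
      exact hpos x hx
  -- lower bound K s ≥ -2 s^2
  have hlb : ∀ s : ℝ, 0 < s → -(2*s^2) ≤ K s := by
    intro s hs
    have hs1 : (0:ℝ) < s + 1 := by linarith
    have hLle : Real.log (s+1) ≤ s := by
      have := Real.log_le_sub_one_of_pos hs1
      linarith
    have hLge : s/(s+1) ≤ Real.log (s+1) := by
      have h := Real.log_le_sub_one_of_pos (show (0:ℝ) < (s+1)⁻¹ by positivity)
      rw [Real.log_inv] at h
      have h2 : (s+1)⁻¹ - 1 = -(s/(s+1)) := by field_simp; ring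
      linarith [h2 ▸ h]
    set B := (s+1)*Real.log (s+1) - s with hBdef
    have hB0 : 0 ≤ B := by
      have hBs : s ≤ (s+1) * Real.log (s+1) := by
        calc s = (s/(s+1)) * (s+1) := by field_simp
          _ ≤ Real.log (s+1) * (s+1) := mul_le_mul_of_nonneg_right hLge hs1.le
          _ = (s+1) * Real.log (s+1) := by ring
      simp only [hBdef]
      linarith
    have hB2 : B ≤ s^2 := by
      simp only [hBdef]
      nlinarith
    have hBsq : B^2 ≤ s^4 := by nlinarith
    have hq : 2 * B^2 / s^2 ≤ 2 * s^2 := by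
      rw [div_le_iff₀ (by positivity)]
      nlinarith
    simp only [hK]
    have h1 : 0 ≤ s - Real.log (s+1) := by linarith
    have : 2 * ((s+1) * Real.log (s+1) - s)^2 / s^2 = 2 * B^2 / s^2 := by
      rw [hBdef]
    rw [this]
    linarith
  -- 0 ≤ K (t/2)
  have h0 : 0 ≤ K (t/2) := by
    have key : ∀ ε : ℝ, 0 < ε → -ε ≤ K (t/2) := by
      intro ε hε
      obtain ⟨s', hs'pos, hs'lt, hs'sq⟩ : ∃ s', 0 < s' ∧ s' < t/2 ∧ 2*s'^2 ≤ ε := by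
        refine ⟨min (t/4) (Real.sqrt (ε/2) / 2), lt_min (by linarith) (by positivity),
          lt_of_le_of_lt (min_le_left _ _) (by linarith), ?_⟩
        have h3 : min (t/4) (Real.sqrt (ε/2) / 2) ≤ Real.sqrt (ε/2) / 2 := min_le_right _ _
        have h5 : (Real.sqrt (ε/2))^2 = ε/2 := Real.sq_sqrt (by positivity)
        have h6 : 0 ≤ min (t/4) (Real.sqrt (ε/2) / 2) :=
          le_min (by linarith) (by positivity)
        nlinarith [Real.sqrt_nonneg (ε/2)]
      have h1 : K s' < K (t/2) := hmono (Set.mem_Ioi.mpr hs'pos)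
        (Set.mem_Ioi.mpr (by linarith)) hs'lt
      have h2 : -(2*s'^2) ≤ K s' := hlb s' hs'pos
      have h3 : -ε ≤ -(2*s'^2) := by linarith
      exact h3.trans (h2.trans h1.le)
    by_contra h
    push_neg at h
    have := key (-(K (t/2))/2) (by linarith)
    linarith
  -- conclude
  have hKt : 0 < K t := lt_of_le_of_lt h0 (hmono (Set.mem_Ioi.mpr (by linarith))
    (Set.mem_Ioi.mpr ht) (by linarith))
  have ht2 : (0:ℝ) < t^2 := by positivity
  have hfinal : K t * t^2 = -(t^2 * Real.log (t+1) - t^3 + 2*((t+1)*Real.log (t+1) - t)^2) := by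
    simp only [hK]
    field_simp
    ring
  nlinarith [mul_pos hKt ht2]
end

section
/- For all t > 0, 8·log(1+t) < (6t³ + 12t² + 8t)/(t+1)². -/
open Real Set

theorem stmt_7 (t : ℝ) (ht : 0 < t) :
    8 * Real.log (1 + t) < (6 * t^3 + 12 * t^2 + 8 * t) / (t + 1)^2 := by
  set f : ℝ → ℝ := fun x => 6*x + 2/(x+1) - 2/(x+1)^2 - 8 * Real.log (1+x) with hf
  have key : ∀ x : ℝ, 0 ≤ x → HasDerivAt f (x^2*(6*x+10)/(x+1)^3) x := by
    intro x hx
    have hx0 : (0:ℝ) < x + 1 := by linarith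
    have hx1 : x + 1 ≠ 0 := ne_of_gt hx0
    have h1 : HasDerivAt (fun y:ℝ => y + 1) 1 x := (hasDerivAt_id x).add_const 1
    have h2 : HasDerivAt (fun y:ℝ => 2/(y+1)) (2 * (-1/(x+1)^2)) x := by
      simpa [div_eq_mul_inv] using (h1.inv hx1).const_mul 2
    have h3 : HasDerivAt (fun y:ℝ => 2/(y+1)^2) (2 * (-(2*(x+1)^1*1)/((x+1)^2)^2)) x := by
      simpa [div_eq_mul_inv] using ((h1.pow 2).inv (pow_ne_zero 2 hx1)).const_mul 2
    have h4 : HasDerivAt (fun y:ℝ => 8 * Real.log (1+y)) (8 * (1/(1+x))) x := by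
      have h1' : HasDerivAt (fun y:ℝ => 1 + y) 1 x := (hasDerivAt_id x).const_add 1
      exact (h1'.log (by linarith)).const_mul 8
    have h5 : HasDerivAt (fun y:ℝ => 6*y) 6 x := by
      simpa using (hasDerivAt_id x).const_mul 6
    have := ((h5.add h2).sub h3).sub h4
    refine this.congr_deriv ?_
    field_simp
    ring
  have hcont : ContinuousOn f (Ici 0) :=
    fun x hx => ((key x hx).continuousAt).continuousWithinAt
  have hmono : StrictMonoOn f (Ici 0) := by
    apply strictMonoOn_of_deriv_pos (convex_Ici 0) hcont
    intro x hx
    rw [interior_Ici] at hx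
    have hx' : 0 < x := hx
    rw [(key x (le_of_lt hx)).deriv]
    have hx1 : (0:ℝ) < x + 1 := by linarith
    apply div_pos (by nlinarith) (by positivity)
  have h0 : f 0 < f t := hmono self_mem_Ici (le_of_lt ht) ht
  have hf0 : f 0 = 0 := by simp [hf]
  have hft : f t = 6*t + 2/(t+1) - 2/(t+1)^2 - 8 * Real.log (1+t) := rfl
  have ht1 : (0:ℝ) < t + 1 := by linarith
  have heq : (6 * t^3 + 12 * t^2 + 8 * t) / (t + 1)^2 = 6*t + 2/(t+1) - 2/(t+1)^2 := by
    field_simp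
    ring
  rw [heq]
  rw [hf0, hft] at h0
  linarith
end

section
/- For all real x ≥ 0, ∫ from x to x+1 of log Γ(u) du = x·log x − x + (1/2)·log(2π), where for x = 0 the term x·log x is interpreted as 0. -/
open Real MeasureTheory intervalIntegral Filter Topology Set

lemma contLG {x : ℝ} (hx : 0 < x) : ContinuousAt (fun u => Real.log (Real.Gamma u)) x := by
  have h1 : DifferentiableAt ℝ Real.Gamma x := by
    refine Real.differentiableAt_Gamma (fun m => ?_)
    have : (0:ℝ) ≤ m := Nat.cast_nonneg m
    nlinarith
  exact h1.continuousAt.log (Real.Gamma_pos_of_pos hx).ne'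

lemma intLG {a b : ℝ} (ha : 0 < a) (hb : 0 < b) :
    IntervalIntegrable (fun u => Real.log (Real.Gamma u)) volume a b := by
  refine (ContinuousOn.intervalIntegrable ?_)
  intro u hu
  have hu0 : 0 < u := lt_of_lt_of_le (lt_min ha hb) (by simpa using hu.1)
  exact (contLG hu0).continuousWithinAt

lemma LGrec {u : ℝ} (hu : 0 < u) :
    Real.log (Real.Gamma u) = Real.log (Real.Gamma (u + 1)) - Real.log u := by
  rw [Real.Gamma_add_one hu.ne', Real.log_mul hu.ne' (Real.Gamma_pos_of_pos hu).ne']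
  ring

lemma intLog01 : IntervalIntegrable Real.log volume 0 1 := by
  have h : IntegrableOn (fun x : ℝ => -Real.log x) (Ioc (0:ℝ) 1) volume := by
    refine integrableOn_deriv_of_nonneg (g := fun x => x - x * Real.log x) ?_ ?_ ?_
    · exact (continuous_id.continuousOn).sub Real.continuous_mul_log.continuousOn
    · intro x hx
      have := (Real.hasDerivAt_mul_log (x := x) (ne_of_gt hx.1))
      have h2 := (hasDerivAt_id x).sub this
      have h3 : HasDerivAt (fun x => x - x * Real.log x) (1 - (Real.log x + 1)) x := h2
      convert h3 using 1
      ring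
    · intro x hx
      have : Real.log x ≤ 0 := Real.log_nonpos (le_of_lt hx.1) (le_of_lt hx.2)
      simp only [neg_nonneg]
      exact this
  rw [intervalIntegrable_iff_integrableOn_Ioc_of_le (by norm_num)]
  exact (h.neg.congr (Filter.Eventually.of_forall fun x => by simp))




noncomputable def Fr (x : ℝ) : ℝ := ∫ u in x..(x+1), Real.log (Real.Gamma u)

lemma intLog01val : ∫ u in (0:ℝ)..1, Real.log u = -1 := by
  have hcont : ContinuousOn (fun b => ∫ u in (0:ℝ)..b, Real.log u) (Icc 0 1) := by
    have := continuousOn_primitive_interval (a := (0:ℝ)) (b := 1) (μ := volume)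
      (f := Real.log) ?_
    · simpa [uIcc_of_le (by norm_num : (0:ℝ) ≤ 1)] using this
    · rw [uIcc_of_le (by norm_num : (0:ℝ) ≤ 1)]
      exact (intervalIntegrable_iff_integrableOn_Icc_of_le (by norm_num)).mp intLog01
  -- tendsto of primitive at 0 within Icc
  have h0 : Filter.Tendsto (fun b => ∫ u in (0:ℝ)..b, Real.log u)
      (𝓝[>] (0:ℝ)) (𝓝 0) := by
    have h1 := (hcont 0 (by simp [zero_le_one])).tendsto
    rw [intervalIntegral.integral_same] at h1
    have hsub : 𝓝[>] (0:ℝ) ≤ 𝓝[Icc (0:ℝ) 1] 0 := by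
      rw [← nhdsWithin_Ioc_eq_nhdsGT (zero_lt_one)]
      exact nhdsWithin_mono _ Ioc_subset_Icc_self
    exact h1.mono_left hsub
  -- ∫_a^1 log = -1 + a - a log a  for 0 < a ≤ 1
  have hval : ∀ a : ℝ, 0 < a → (∫ u in a..(1:ℝ), Real.log u) = -1 + a - a * Real.log a := by
    intro a ha
    rw [integral_log]
    simp; ring
  have hsplit : ∀ a : ℝ, 0 < a → a ≤ 1 →
      (∫ u in (0:ℝ)..1, Real.log u) = (∫ u in (0:ℝ)..a, Real.log u) + ∫ u in a..1, Real.log u := by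
    intro a ha ha1
    rw [integral_add_adjacent_intervals]
    · exact intLog01.mono_set (by rw [uIcc_of_le ha.le, uIcc_of_le (by norm_num)]; exact Icc_subset_Icc le_rfl ha1)
    · exact intLog01.mono_set (by rw [uIcc_of_le ha1, uIcc_of_le (by norm_num)]; exact Icc_subset_Icc ha.le le_rfl)
  -- conclude
  have hlim : Filter.Tendsto (fun a => (∫ u in (0:ℝ)..a, Real.log u) + ∫ u in a..1, Real.log u)
      (𝓝[>] (0:ℝ)) (𝓝 (-1)) := by
    have h2 : Filter.Tendsto (fun a : ℝ => ∫ u in a..1, Real.log u) (𝓝[>] (0:ℝ)) (𝓝 (-1)) := by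
      have hx : Filter.Tendsto (fun a : ℝ => -1 + a - a * Real.log a) (𝓝[>] (0:ℝ)) (𝓝 (-1)) := by
        have hc : Continuous (fun a : ℝ => -1 + a - a * Real.log a) :=
          (continuous_const.add continuous_id).sub Real.continuous_mul_log
        have := (hc.tendsto 0).mono_left (nhdsWithin_le_nhds (s := Ioi (0:ℝ)))
        simpa using this
      refine hx.congr' ?_
      filter_upwards [self_mem_nhdsWithin] with a (ha : 0 < a)
      exact (hval a ha).symm
    simpa using h0.add h2
  have heq : (fun a => (∫ u in (0:ℝ)..a, Real.log u) + ∫ u in a..1, Real.log u)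
      =ᶠ[𝓝[>] (0:ℝ)] (fun _ => ∫ u in (0:ℝ)..1, Real.log u) := by
    filter_upwards [Ioo_mem_nhdsGT_of_mem (by norm_num : (0:ℝ) ∈ Ico (0:ℝ) 1)] with a ha
    exact (hsplit a ha.1 ha.2.le).symm
  have := hlim.congr' heq
  exact tendsto_nhds_unique tendsto_const_nhds this




lemma smLG {y : ℝ} (hy : 0 < y) :
    StronglyMeasurableAtFilter (fun u => Real.log (Real.Gamma u)) (𝓝 y) volume :=
  ContinuousAt.stronglyMeasurableAtFilter isOpen_Ioi
    (fun u (hu : 0 < u) => contLG hu) y hy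

lemma primDeriv {c y : ℝ} (hc : 0 < c) (hy : 0 < y) :
    HasDerivAt (fun z => ∫ u in c..z, Real.log (Real.Gamma u)) (Real.log (Real.Gamma y)) y :=
  intervalIntegral.integral_hasDerivAt_right (intLG hc hy) (smLG hy) (contLG hy)

lemma FrDeriv {x : ℝ} (hx : 0 < x) : HasDerivAt Fr (Real.log x) x := by
  have key : ∀ y : ℝ, 0 < y → Fr y =
      (∫ u in x..(y+1), Real.log (Real.Gamma u)) - ∫ u in x..y, Real.log (Real.Gamma u) := by
    intro y hy
    have h1 := intervalIntegral.integral_add_adjacent_intervals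
      (intLG hx hy) (intLG hy (by linarith : (0:ℝ) < y + 1))
    rw [Fr]
    linarith [h1]
  have h1 : HasDerivAt (fun y : ℝ => ∫ u in x..(y+1), Real.log (Real.Gamma u))
      (Real.log (Real.Gamma (x+1))) x := by
    have h2 := (primDeriv hx (by linarith : (0:ℝ) < x + 1)).comp x
      ((hasDerivAt_id x).add_const 1)
    have h5 : HasDerivAt (fun y : ℝ => ∫ u in x..(y+1), Real.log (Real.Gamma u))
        (Real.log (Real.Gamma (x+1)) * 1) x := h2
    simpa using h5
  have h3 := h1.sub (primDeriv hx hx)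
  have heq : (fun y : ℝ => (∫ u in x..(y+1), Real.log (Real.Gamma u)) -
      ∫ u in x..y, Real.log (Real.Gamma u)) =ᶠ[𝓝 x] Fr := by
    filter_upwards [Ioi_mem_nhds hx] with y (hy : 0 < y)
    exact (key y hy).symm
  have h4 := h3.congr_of_eventuallyEq heq.symm
  have : Real.log (Real.Gamma (x+1)) - Real.log (Real.Gamma x) = Real.log x := by
    rw [LGrec hx]; ring
  rwa [this] at h4

lemma Hconst {a b : ℝ} (ha : 0 < a) (hab : a ≤ b) :
    Fr b - (b * Real.log b - b) = Fr a - (a * Real.log a - a) := by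
  set H : ℝ → ℝ := fun x => Fr x - (x * Real.log x - x) with hH
  have hderiv : ∀ x : ℝ, 0 < x → HasDerivAt H 0 x := by
    intro x hx
    have h1 := (Real.hasDerivAt_mul_log hx.ne').sub (hasDerivAt_id x)
    have h2 := (FrDeriv hx).sub h1
    have : Real.log x - (Real.log x + 1 - 1) = 0 := by ring
    rwa [this] at h2
  have hcont : ContinuousOn H (Icc a b) := by
    intro y hy
    exact ((hderiv y (lt_of_lt_of_le ha hy.1)).continuousAt).continuousWithinAt
  have := constant_of_has_deriv_right_zero hcont (fun y hy => ?_) b ⟨hab, le_rfl⟩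
  · exact this
  · exact ((hderiv y (lt_of_lt_of_le ha hy.1)).hasDerivWithinAt)




-- integral of affine function
lemma intAffine (a c1 c2 : ℝ) :
    ∫ u in a..(a+1), (c1 + (u - a) * c2) = c1 + c2 / 2 := by
  have h1 : IntervalIntegrable (fun u : ℝ => c1 - a * c2) volume a (a+1) :=
    intervalIntegrable_const
  have h2 : IntervalIntegrable (fun u : ℝ => u * c2) volume a (a+1) :=
    (continuous_id.mul continuous_const).intervalIntegrable _ _
  have heq : (fun u : ℝ => c1 + (u - a) * c2) = fun u => (c1 - a * c2) + u * c2 := by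
    funext u; ring
  rw [heq, intervalIntegral.integral_add h1 h2, intervalIntegral.integral_const,
    intervalIntegral.integral_mul_const, integral_id]
  simp [smul_eq_mul]
  ring

lemma FrUpper (x : ℝ) (hx : 0 < x) :
    Fr x ≤ (Real.log (Real.Gamma x) + Real.log (Real.Gamma (x+1))) / 2 := by
  set f : ℝ → ℝ := fun u => Real.log (Real.Gamma u) with hf
  have hconv := Real.convexOn_log_Gamma
  have hpt : ∀ u ∈ Icc x (x+1), f u ≤ f x + (u - x) * (f (x+1) - f x) := by
    intro u hu
    have h1 := hconv.2 (Set.mem_Ioi.mpr hx) (Set.mem_Ioi.mpr (by linarith : (0:ℝ) < x+1))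
      (by linarith [hu.2] : (0:ℝ) ≤ (x+1) - u) (by linarith [hu.1] : (0:ℝ) ≤ u - x)
      (by ring : ((x+1) - u) + (u - x) = 1)
    have h2 : ((x+1) - u) • x + (u - x) • (x+1) = u := by simp [smul_eq_mul]; ring
    rw [h2] at h1
    simp only [smul_eq_mul, Function.comp] at h1
    calc f u ≤ ((x+1) - u) * f x + (u - x) * f (x+1) := h1
      _ = f x + (u - x) * (f (x+1) - f x) := by ring
  have hmono := intervalIntegral.integral_mono_on (by linarith : x ≤ x + 1)
    (intLG hx (by linarith)) ?_ hpt
  · calc Fr x ≤ ∫ u in x..(x+1), (f x + (u - x) * (f (x+1) - f x)) := hmono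
      _ = f x + (f (x+1) - f x) / 2 := intAffine x _ _
      _ = (f x + f (x+1)) / 2 := by ring
  · exact (continuous_const.add ((continuous_id.sub continuous_const).mul
      continuous_const)).intervalIntegrable _ _

lemma FrLower (x : ℝ) (hx : 0 < x) :
    Real.log (Real.Gamma (x+1)) - Real.log (x+1) / 2 ≤ Fr x := by
  set f : ℝ → ℝ := fun u => Real.log (Real.Gamma u) with hf
  have hconv := Real.convexOn_log_Gamma
  have hpt : ∀ u ∈ Icc x (x+1), f (x+1) + (u - (x+1)) * Real.log (x+1) ≤ f u := by
    intro u hu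
    rcases eq_or_lt_of_le hu.2 with h | h
    · simp [h]
    · have hslope := hconv.slope_mono_adjacent (Set.mem_Ioi.mpr (lt_of_lt_of_le hx hu.1))
        (Set.mem_Ioi.mpr (by linarith : (0:ℝ) < x+2)) h (by linarith : x+1 < x+2)
      simp only [Function.comp] at hslope
      have hkey : f (x+2) - f (x+1) = Real.log (x+1) := by
        have := LGrec (by linarith : (0:ℝ) < x + 1)
        have h2 : x + 1 + 1 = x + 2 := by ring
        rw [h2] at this
        simp only [hf]
        linarith [this]
      rw [show x + 2 - (x+1) = 1 by ring, div_one, hkey] at hslope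
      have hpos : 0 < x + 1 - u := by linarith
      have := (div_le_iff₀ hpos).mp hslope
      nlinarith [this]
  have hmono := intervalIntegral.integral_mono_on (by linarith : x ≤ x + 1) ?_
    (intLG hx (by linarith)) hpt
  · have hval : (∫ u in x..(x+1), (f (x+1) + (u - (x+1)) * Real.log (x+1)))
        = f (x+1) - Real.log (x+1) / 2 := by
      have heq : (fun u : ℝ => f (x+1) + (u - (x+1)) * Real.log (x+1))
          = fun u => (f (x+1) - Real.log (x+1)) + (u - x) * Real.log (x+1) := by
        funext u; ring
      rw [heq, intAffine x _ _]
      ring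
    calc f (x+1) - Real.log (x+1) / 2 = _ := hval.symm
      _ ≤ Fr x := hmono
  · exact (continuous_const.add ((continuous_id.sub continuous_const).mul
      continuous_const)).intervalIntegrable _ _




lemma logStirling (n : ℕ) (hn : 1 ≤ n) :
    Real.log (Stirling.stirlingSeq n) =
      Real.log (n.factorial) - (1/2) * Real.log (2 * n) - n * (Real.log n - 1) := by
  have hn0 : (0:ℝ) < n := by exact_mod_cast hn
  have hfac : (0:ℝ) < (n.factorial : ℝ) := by exact_mod_cast n.factorial_pos
  have h2n : (0:ℝ) < 2 * n := by linarith
  have hden : (0:ℝ) < Real.sqrt (2 * n) * ((n : ℝ) / Real.exp 1) ^ n :=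
    mul_pos (Real.sqrt_pos.mpr h2n) (pow_pos (div_pos hn0 (Real.exp_pos 1)) n)
  rw [Stirling.stirlingSeq, Real.log_div hfac.ne' hden.ne',
    Real.log_mul (Real.sqrt_pos.mpr h2n).ne' (pow_pos (div_pos hn0 (Real.exp_pos 1)) n).ne',
    Real.log_sqrt h2n.le, Real.log_pow, Real.log_div hn0.ne' (Real.exp_pos 1).ne',
    Real.log_exp]
  ring

lemma logS_tendsto :
    Tendsto (fun n : ℕ => Real.log (Stirling.stirlingSeq n)) atTop
      (𝓝 ((1/2) * Real.log π)) := by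
  have hπ : (0:ℝ) < Real.sqrt π := Real.sqrt_pos.mpr Real.pi_pos
  have h1 := (Real.continuousAt_log hπ.ne').tendsto.comp Stirling.tendsto_stirlingSeq_sqrt_pi
  have h2 : Real.log (Real.sqrt π) = (1/2) * Real.log π := by
    rw [Real.log_sqrt Real.pi_pos.le]; ring
  rw [h2] at h1
  exact h1

lemma Htendsto :
    Tendsto (fun n : ℕ => Fr n - ((n : ℝ) * Real.log n - n)) atTop
      (𝓝 ((1/2) * Real.log (2 * π))) := by
  set c : ℝ := (1/2) * Real.log (2 * π) with hc
  have hcval : c = (1/2) * Real.log π + (1/2) * Real.log 2 := by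
    rw [hc, Real.log_mul two_ne_zero Real.pi_pos.ne']; ring
  -- lower and upper sequences
  set L : ℕ → ℝ := fun n => Real.log (Stirling.stirlingSeq n) + (1/2) * Real.log 2
    + (1/2) * (Real.log n - Real.log (n+1)) with hL
  set U : ℕ → ℝ := fun n => Real.log (Stirling.stirlingSeq n) + (1/2) * Real.log 2 with hU
  have hLt : Tendsto L atTop (𝓝 c) := by
    have hrat : Tendsto (fun n : ℕ => Real.log n - Real.log (n+1)) atTop (𝓝 0) := by
      have h1 : Tendsto (fun n : ℕ => (n : ℝ) / (n+1)) atTop (𝓝 1) := by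
        have := tendsto_natCast_div_add_atTop (1 : ℝ)
        exact this
      have h2 := (Real.continuousAt_log one_ne_zero).tendsto.comp h1
      rw [Real.log_one] at h2
      refine h2.congr' ?_
      filter_upwards [eventually_ge_atTop 1] with n hn
      have hn0 : (0:ℝ) < n := by exact_mod_cast hn
      simp only [Function.comp]
      rw [Real.log_div hn0.ne' (by positivity)]
    have hstep : Tendsto (fun n : ℕ => Real.log (Stirling.stirlingSeq n) + (1/2) * Real.log 2
        + (1/2) * (Real.log n - Real.log (n+1))) atTop
        (𝓝 ((1/2) * Real.log π + (1/2) * Real.log 2 + (1/2) * 0)) :=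
      (logS_tendsto.add tendsto_const_nhds).add (hrat.const_mul _)
    rw [hcval, show (1/2:ℝ) * Real.log π + (1/2) * Real.log 2
      = (1/2) * Real.log π + (1/2) * Real.log 2 + (1/2) * 0 by ring]
    simp only [hL]
    exact hstep
  have hUt : Tendsto U atTop (𝓝 c) := by
    have hstep : Tendsto (fun n : ℕ => Real.log (Stirling.stirlingSeq n) + (1/2) * Real.log 2)
        atTop (𝓝 ((1/2) * Real.log π + (1/2) * Real.log 2)) :=
      logS_tendsto.add tendsto_const_nhds
    rw [hcval]
    exact hstep
  refine tendsto_of_tendsto_of_tendsto_of_le_of_le' hLt hUt ?_ ?_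
  · filter_upwards [eventually_ge_atTop 1] with n hn
    have hn0 : (0:ℝ) < n := by exact_mod_cast hn
    have hfac : Real.log (Real.Gamma ((n:ℝ)+1)) = Real.log (n.factorial) := by
      rw [Real.Gamma_nat_eq_factorial]
    have h1 := FrLower n hn0
    rw [hfac] at h1
    have h2 := logStirling n hn
    simp only [hL]
    have : Real.log (Stirling.stirlingSeq n) + (1/2) * Real.log 2
        + (1/2) * (Real.log n - Real.log (n+1))
        = Real.log (n.factorial) - Real.log ((n:ℝ)+1)/2 - ((n:ℝ) * Real.log n - n) := by
      rw [h2, Real.log_mul two_ne_zero hn0.ne']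
      ring
    rw [this]
    linarith [h1]
  · filter_upwards [eventually_ge_atTop 1] with n hn
    have hn0 : (0:ℝ) < n := by exact_mod_cast hn
    have hfac : Real.log (Real.Gamma ((n:ℝ)+1)) = Real.log (n.factorial) := by
      rw [Real.Gamma_nat_eq_factorial]
    have h1 := FrUpper n hn0
    have hrec := LGrec hn0
    rw [hfac] at h1 hrec
    have h2 := logStirling n hn
    simp only [hU]
    have : Real.log (Stirling.stirlingSeq n) + (1/2) * Real.log 2
        = (Real.log (Real.Gamma (n:ℝ)) + Real.log (n.factorial)) / 2 - ((n:ℝ) * Real.log n - n) := by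
      rw [h2, hrec, Real.log_mul two_ne_zero hn0.ne']
      ring
    linarith [h1, this.ge]

lemma FrEqPos {x : ℝ} (hx : 0 < x) :
    Fr x = x * Real.log x - x + (1/2) * Real.log (2 * π) := by
  have hev : ∀ᶠ n : ℕ in atTop,
      Fr n - ((n:ℝ) * Real.log n - n) = Fr x - (x * Real.log x - x) := by
    filter_upwards [eventually_ge_atTop (max 1 ⌈x⌉₊)] with n hn
    have hxn : x ≤ (n:ℝ) := by
      have h1 : (⌈x⌉₊ : ℝ) ≤ n := by exact_mod_cast le_trans (le_max_right _ _) hn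
      exact (Nat.le_ceil x).trans h1
    exact Hconst hx hxn
  have h1 := Htendsto.congr' hev
  have h2 := tendsto_nhds_unique h1 tendsto_const_nhds
  linarith [h2]

lemma Fr0 : Fr 0 = (1/2) * Real.log (2 * π) := by
  have hcongr : Fr 0 = ∫ u in (0:ℝ)..1,
      (Real.log (Real.Gamma (u+1)) - Real.log u) := by
    rw [Fr, zero_add]
    refine intervalIntegral.integral_congr (fun u hu => ?_)
    rw [uIcc_of_le (by norm_num : (0:ℝ) ≤ 1)] at hu
    rcases eq_or_lt_of_le hu.1 with h | h
    · rw [← h]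
      simp [Real.Gamma_zero, Real.Gamma_one]
    · exact LGrec h
  have hint1 : IntervalIntegrable (fun u : ℝ => Real.log (Real.Gamma (u+1))) volume 0 1 := by
    refine ContinuousOn.intervalIntegrable (fun u hu => ?_)
    rw [uIcc_of_le (by norm_num : (0:ℝ) ≤ 1)] at hu
    have hca : ContinuousAt (fun v : ℝ => v + 1) u := by fun_prop
    have hpos : (0:ℝ) < u + 1 := by linarith [hu.1]
    have hcomp := ContinuousAt.comp (g := fun w => Real.log (Real.Gamma w))
      (f := fun v : ℝ => v + 1) (x := u) (contLG hpos) hca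
    exact hcomp.continuousWithinAt
  have hshift : (∫ u in (0:ℝ)..1, Real.log (Real.Gamma (u+1))) = Fr 1 := by
    rw [Fr]
    have := intervalIntegral.integral_comp_add_right
      (a := (0:ℝ)) (b := 1) (fun u => Real.log (Real.Gamma u)) 1
    rw [this]
    norm_num
  rw [hcongr, intervalIntegral.integral_sub hint1 intLog01, hshift, intLog01val,
    FrEqPos one_pos]
  simp

theorem stmt_8 (x : ℝ) (hx : 0 ≤ x) :
    ∫ u in x..(x + 1), Real.log (Real.Gamma u) =
      x * Real.log x - x + (1/2) * Real.log (2 * Real.pi) := by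
  rcases eq_or_lt_of_le hx with h | h
  · rw [← h]
    have h0 := Fr0
    rw [Fr, zero_add] at h0
    rw [show (0:ℝ) + 1 = 1 from zero_add 1, h0]
    simp [Real.log_zero]
  · exact FrEqPos h
end

section
/- For all x ≥ 1, Γ(x+1) < √(2π)·x^x·e^{−x}·(x² + x/3 + 1/18)^{1/4}. -/
open Real Filter Topology


lemma artanh_lower {x : ℝ} (h0 : 0 ≤ x) (h1 : x < 1) :
    2*x + 2/3*x^3 ≤ Real.log (1+x) - Real.log (1-x) := by
  have habs : |x| < 1 := by rw [abs_of_nonneg h0]; exact h1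
  have hs := hasSum_log_sub_log_of_abs_lt_one habs
  have h2 : ∑ k ∈ Finset.range 2, (2 : ℝ) * (1 / (2 * (k:ℝ) + 1)) * x ^ (2 * k + 1)
      ≤ Real.log (1+x) - Real.log (1-x) :=
    sum_le_hasSum _ (fun k _ => by positivity) hs
  have h3 : ∑ k ∈ Finset.range 2, (2 : ℝ) * (1 / (2 * (k:ℝ) + 1)) * x ^ (2 * k + 1)
      = 2*x + 2/3*x^3 := by
    rw [Finset.sum_range_succ, Finset.sum_range_one]
    norm_num
  linarith

lemma artanh_upper {x : ℝ} (h0 : 0 ≤ x) (h1 : x < 1) :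
    Real.log (1+x) - Real.log (1-x) ≤ 2*x + 2/3*x^3 + 2/5*x^5 + 2/7*x^7/(1-x^2) := by
  have habs : |x| < 1 := by rw [abs_of_nonneg h0]; exact h1
  have hs := hasSum_log_sub_log_of_abs_lt_one habs
  have hx2 : x^2 < 1 := by nlinarith
  have hx2' : (0:ℝ) ≤ x^2 := sq_nonneg x
  have hgeo0 : HasSum (fun k : ℕ => (x^2)^k) ((1-x^2)⁻¹) :=
    hasSum_geometric_of_lt_one hx2' hx2
  have hgeo : HasSum (fun k : ℕ => (2/7*x^7) * (x^2)^k) (2/7*x^7/(1-x^2)) := by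
    have := hgeo0.mul_left (2/7*x^7)
    rwa [← div_eq_mul_inv] at this
  have htail := (hasSum_nat_add_iff' (f := fun k : ℕ => (2 : ℝ) * (1 / (2 * (k:ℝ) + 1)) * x ^ (2 * k + 1)) 3).mpr hs
  have hle : Real.log (1+x) - Real.log (1-x)
      - ∑ k ∈ Finset.range 3, (2 : ℝ) * (1 / (2 * (k:ℝ) + 1)) * x ^ (2 * k + 1)
      ≤ 2/7*x^7/(1-x^2) := by
    refine hasSum_le (fun k => ?_) htail hgeo
    have hp : x ^ (2*(k+3)+1) = x^7 * (x^2)^k := by ring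
    have hc : (0:ℝ) < 2 * ((k:ℝ)+3) + 1 := by positivity
    have h7 : (2 : ℝ) * (1 / (2 * ((k:ℝ)+3) + 1)) ≤ 2/7 := by
      rw [mul_one_div]
      apply div_le_div_of_nonneg_left (by norm_num) (by norm_num)
      linarith [Nat.cast_nonneg (α := ℝ) k]
    have : (2 : ℝ) * (1 / (2 * (((k:ℕ):ℝ)+3) + 1)) * x ^ (2*(k+3)+1)
        ≤ 2/7 * (x^7 * (x^2)^k) := by
      rw [hp]
      exact mul_le_mul_of_nonneg_right h7 (by positivity)
    calc (2 : ℝ) * (1 / (2 * ((((k+3):ℕ)):ℝ) + 1)) * x ^ (2 * (k+3) + 1)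
        ≤ 2/7 * (x^7 * (x^2)^k) := by push_cast at this ⊢; exact this
      _ = 2/7*x^7 * (x^2)^k := by ring
  have hsum : ∑ k ∈ Finset.range 3, (2 : ℝ) * (1 / (2 * (k:ℝ) + 1)) * x ^ (2 * k + 1)
      = 2*x + 2/3*x^3 + 2/5*x^5 := by
    rw [Finset.sum_range_succ, Finset.sum_range_succ, Finset.sum_range_one]
    norm_num
  linarith

-- key polynomial inequality
lemma key_poly (y : ℝ) (hy : 1 ≤ y) :
    1/(3*(2*y+1)^2) + 1/(5*(2*y+1)^4) + 1/(7*((2*y+1)^4*((2*y+1)^2-1)))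
      < (1/4)*(2*((6*y^2+8*y+1)/(36*y^4+84*y^3+56*y^2+8*y+1))
          + 2/3*((6*y^2+8*y+1)/(36*y^4+84*y^3+56*y^2+8*y+1))^3) := by
  have hu : (0:ℝ) ≤ y - 1 := by linarith
  have hc : (0:ℝ) < 2*y+1 := by linarith
  have hc2 : (0:ℝ) < (2*y+1)^2-1 := by nlinarith
  have hS : (0:ℝ) < 36*y^4+84*y^3+56*y^2+8*y+1 := by nlinarith [sq_nonneg y, pow_pos (show (0:ℝ) < y by linarith) 3, pow_pos (show (0:ℝ) < y by linarith) 4]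
  rw [← sub_pos]
  have hE : (1/4)*(2*((6*y^2+8*y+1)/(36*y^4+84*y^3+56*y^2+8*y+1))
          + 2/3*((6*y^2+8*y+1)/(36*y^4+84*y^3+56*y^2+8*y+1))^3)
      - (1/(3*(2*y+1)^2) + 1/(5*(2*y+1)^4) + 1/(7*((2*y+1)^4*((2*y+1)^2-1))))
      = (777815250 + 7575016200*(y-1)^1 + 33996497720*(y-1)^2 + 93178790664*(y-1)^3
        + 174215232424*(y-1)^4 + 235015493712*(y-1)^5 + 235856097072*(y-1)^6
        + 178861873568*(y-1)^7 + 102984084224*(y-1)^8 + 44796135232*(y-1)^9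
        + 14489271616*(y-1)^10 + 3378975744*(y-1)^11 + 537025536*(y-1)^12
        + 52061184*(y-1)^13 + 2322432*(y-1)^14)
        / (210*(36*y^4+84*y^3+56*y^2+8*y+1)^3*((2*y+1)^4*((2*y+1)^2-1))) := by
    field_simp
    ring
  rw [hE]
  apply div_pos
  · have h2 := pow_nonneg hu 2
    have h3 := pow_nonneg hu 3
    have h4 := pow_nonneg hu 4
    have h5 := pow_nonneg hu 5
    have h6 := pow_nonneg hu 6
    have h7 := pow_nonneg hu 7
    have h8 := pow_nonneg hu 8
    have h9 := pow_nonneg hu 9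
    have h10 := pow_nonneg hu 10
    have h11 := pow_nonneg hu 11
    have h12 := pow_nonneg hu 12
    have h13 := pow_nonneg hu 13
    have h14 := pow_nonneg hu 14
    positivity
  · positivity

-- lower bound for log(1+u)
lemma log_one_add_ge {u : ℝ} (hu : 0 ≤ u) : 2*u/(2+u) ≤ Real.log (1+u) := by
  set x := u/(2+u) with hxdef
  have h2u : (0:ℝ) < 2 + u := by linarith
  have hx0 : 0 ≤ x := by positivity
  have hx1 : x < 1 := by rw [hxdef, div_lt_one h2u]; linarith
  have hid : (1+x)/(1-x) = 1 + u := by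
    rw [hxdef]
    field_simp
    ring
  have h1x : (0:ℝ) < 1 - x := by linarith
  have h1x' : (0:ℝ) < 1 + x := by linarith
  have hlog : Real.log (1+x) - Real.log (1-x) = Real.log (1+u) := by
    rw [← Real.log_div h1x'.ne' h1x.ne', hid]
  have := artanh_lower hx0 hx1
  rw [hlog] at this
  have hx3 : 0 ≤ 2/3*x^3 := by positivity
  calc 2*u/(2+u) = 2*x := by rw [hxdef]; ring
    _ ≤ 2*x + 2/3*x^3 := by linarith
    _ ≤ Real.log (1+u) := this

-- (y+1/2)(log(y+1) - log y) bounds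
lemma logdiff_eq (y : ℝ) (hy : 1 ≤ y) :
    Real.log (y+1) - Real.log y
      = Real.log (1+1/(2*y+1)) - Real.log (1-1/(2*y+1)) := by
  have hy0 : (0:ℝ) < y := by linarith
  have hc : (0:ℝ) < 2*y+1 := by linarith
  have h1 : 1+1/(2*y+1) = (y+1) * (2/(2*y+1)) := by field_simp; ring
  have h2 : 1-1/(2*y+1) = y * (2/(2*y+1)) := by field_simp; ring
  rw [h1, h2, Real.log_mul (by positivity) (by positivity),
    Real.log_mul hy0.ne' (by positivity)]
  ring

lemma logratio_upper (y : ℝ) (hy : 1 ≤ y) :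
    (y+1/2) * (Real.log (y+1) - Real.log y)
      ≤ 1 + 1/(3*(2*y+1)^2) + 1/(5*(2*y+1)^4) + 1/(7*((2*y+1)^4*((2*y+1)^2-1))) := by
  have hc : (0:ℝ) < 2*y+1 := by linarith
  set s : ℝ := 1/(2*y+1) with hsdef
  have hs0 : 0 ≤ s := by positivity
  have hs1 : s < 1 := by rw [hsdef, div_lt_one hc]; linarith
  have hup := artanh_upper hs0 hs1
  have h1 := logdiff_eq y hy
  have hmul : (y+1/2) * (Real.log (y+1) - Real.log y)
      ≤ (y+1/2) * (2*s + 2/3*s^3 + 2/5*s^5 + 2/7*s^7/(1-s^2)) := by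
    rw [h1]
    exact mul_le_mul_of_nonneg_left hup (by linarith)
  refine hmul.trans (le_of_eq ?_)
  rw [hsdef]
  have hc2 : (0:ℝ) < (2*y+1)^2-1 := by nlinarith
  field_simp

-- classical bound
lemma logratio_classical (y : ℝ) (hy : 1 ≤ y) :
    (y+1/2) * (Real.log (y+1) - Real.log y) ≤ 1 + (1/(12*y) - 1/(12*(y+1))) := by
  have h := logratio_upper y hy
  have hc : (0:ℝ) < 2*y+1 := by linarith
  have hc2 : (0:ℝ) < (2*y+1)^2-1 := by nlinarith
  have hy0 : (0:ℝ) < y := by linarith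
  have hy1 : (0:ℝ) < y+1 := by linarith
  have h2 : 1/(3*(2*y+1)^2) + 1/(5*(2*y+1)^4) + 1/(7*((2*y+1)^4*((2*y+1)^2-1)))
      ≤ 1/(12*y) - 1/(12*(y+1)) := by
    rw [← sub_nonneg]
    have hE : 1/(12*y) - 1/(12*(y+1))
        - (1/(3*(2*y+1)^2) + 1/(5*(2*y+1)^4) + 1/(7*((2*y+1)^4*((2*y+1)^2-1))))
        = (14*(2*y+1)^2+6) / (105*(2*y+1)^4*((2*y+1)^2-1)) := by
      have : (2*y+1)^2 - 1 = 4*y*(y+1) := by ring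
      rw [this]; field_simp
      ring
    rw [hE]
    positivity
  linarith

-- monotone sequence: log stirlingSeq n - 1/(12 n) increasing
lemma stirling_ub (n : ℕ) (hn : 1 ≤ n) :
    Real.log (Stirling.stirlingSeq n) ≤ Real.log (Real.sqrt π) + 1/(12*n) := by
  set a : ℕ → ℝ := fun m => Real.log (Stirling.stirlingSeq m) - 1/(12*m) with ha
  have hdiff : ∀ m : ℕ, 1 ≤ m → Real.log (Stirling.stirlingSeq m) - Real.log (Stirling.stirlingSeq (m+1))
      = ((m:ℝ)+1/2) * (Real.log ((m:ℝ)+1) - Real.log m) - 1 := by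
    intro m hm
    have hm0 : (0:ℝ) < m := by exact_mod_cast hm
    have hm1 : (0:ℝ) < (m:ℝ)+1 := by linarith
    rw [Stirling.log_stirlingSeq_formula, Stirling.log_stirlingSeq_formula]
    have hfac : (((m+1).factorial : ℕ) : ℝ) = ((m:ℝ)+1) * (m.factorial : ℝ) := by
      rw [Nat.factorial_succ]; push_cast; ring
    have hfp : (0:ℝ) < (m.factorial : ℝ) := by exact_mod_cast m.factorial_pos
    have hlfac : Real.log ((m+1).factorial : ℝ) = Real.log ((m:ℝ)+1) + Real.log (m.factorial : ℝ) := by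
      rw [hfac, Real.log_mul hm1.ne' hfp.ne']
    have hlog2m : Real.log (2*((m:ℝ)+1)) = Real.log 2 + Real.log ((m:ℝ)+1) :=
      Real.log_mul two_ne_zero hm1.ne'
    have hlog2m' : Real.log (2*(m:ℝ)) = Real.log 2 + Real.log (m:ℝ) :=
      Real.log_mul two_ne_zero hm0.ne'
    have hldiv : Real.log ((m:ℝ)/Real.exp 1) = Real.log m - 1 := by
      rw [Real.log_div hm0.ne' (Real.exp_ne_zero 1), Real.log_exp]
    have hldiv' : Real.log (((m:ℝ)+1)/Real.exp 1) = Real.log ((m:ℝ)+1) - 1 := by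
      rw [Real.log_div hm1.ne' (Real.exp_ne_zero 1), Real.log_exp]
    push_cast
    rw [hlfac, hlog2m, hlog2m', hldiv, hldiv']
    ring
  have hmono : Monotone a := by
    apply monotone_nat_of_le_succ
    intro m
    rcases Nat.eq_zero_or_pos m with h0 | hpos
    · subst h0
      simp only [ha]
      rw [Stirling.stirlingSeq_zero, Stirling.stirlingSeq_one]
      have h2 : Real.log (Real.exp 1 / Real.sqrt 2) = 1 - Real.log (Real.sqrt 2) := by
        rw [Real.log_div (Real.exp_ne_zero 1) (by positivity), Real.log_exp]
      have h3 : Real.log (Real.sqrt 2) ≤ Real.log 2 := by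
        apply Real.log_le_log (by positivity)
        nlinarith [Real.sq_sqrt (by norm_num : (2:ℝ) ≥ 0), Real.sqrt_nonneg 2,
          Real.sqrt_le_sqrt (by norm_num : (2:ℝ) ≤ 4)]
      have h4 : Real.log 2 < 0.6931471808 := Real.log_two_lt_d9
      simp only [Real.log_zero]
      rw [h2]
      push_cast
      norm_num
      nlinarith
    · have hm : 1 ≤ m := hpos
      have h := logratio_classical (m:ℝ) (by exact_mod_cast hm)
      have hd := hdiff m hm
      simp only [ha]
      have hm0 : (0:ℝ) < m := by exact_mod_cast hm
      push_cast
      nlinarith [hd, h]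
  have htendsto : Tendsto a atTop (𝓝 (Real.log (Real.sqrt π))) := by
    have h1 : Tendsto (fun m : ℕ => Real.log (Stirling.stirlingSeq m)) atTop
        (𝓝 (Real.log (Real.sqrt π))) := by
      have hpos : Real.sqrt π ≠ 0 := by positivity
      exact (Real.continuousAt_log hpos).tendsto.comp Stirling.tendsto_stirlingSeq_sqrt_pi
    have h2 : Tendsto (fun m : ℕ => 1/(12*(m:ℝ))) atTop (𝓝 0) := by
      have := tendsto_const_div_atTop_nhds_zero_nat (1/12 : ℝ)
      convert this using 2 with m
      rcases Nat.eq_zero_or_pos m with h0 | h0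
      · subst h0; simp
      · have : (0:ℝ) < m := by exact_mod_cast h0
        field_simp
    have h3 := h1.sub h2
    simp only [ha, sub_zero] at h3 ⊢
    convert h3 using 2 with m
  have := hmono.ge_of_tendsto htendsto n
  simp only [ha] at this
  linarith

noncomputable def Dfun (x : ℝ) : ℝ :=
  Real.log (Real.Gamma (x+1)) - ((x+1/2)*Real.log x - x + Real.log (Real.sqrt (2*π))
    + (1/4) * Real.log ((x^2+x/3+1/18)/x^2))

lemma log_factorial_le (m : ℕ) (hm : 1 ≤ m) :
    Real.log (m.factorial : ℝ) ≤ Real.log (Real.sqrt (2*π)) + ((m:ℝ)+1/2)*Real.log m - m + 1/(12*m) := by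
  have hm0 : (0:ℝ) < m := by exact_mod_cast hm
  have hform := Stirling.log_stirlingSeq_formula m
  have hub := stirling_ub m hm
  have h2m : Real.log (2*(m:ℝ)) = Real.log 2 + Real.log m := Real.log_mul two_ne_zero hm0.ne'
  have hdiv : Real.log ((m:ℝ)/Real.exp 1) = Real.log m - 1 := by
    rw [Real.log_div hm0.ne' (Real.exp_ne_zero 1), Real.log_exp]
  have hsq : Real.log (Real.sqrt (2*π)) = Real.log (Real.sqrt 2) + Real.log (Real.sqrt π) := by
    rw [← Real.log_mul (by positivity) (by positivity), ← Real.sqrt_mul (by norm_num)]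
  have hsq2 : Real.log (Real.sqrt 2) = 1/2 * Real.log 2 := by
    rw [Real.sqrt_eq_rpow, Real.log_rpow (by norm_num)]
  rw [hform] at hub
  rw [hsq, hsq2]
  rw [h2m, hdiv] at hub
  linarith

lemma Rfun_nonneg {z : ℝ} (hz : 1 ≤ z) :
    0 ≤ (1/4) * Real.log ((z^2+z/3+1/18)/z^2) := by
  have hz0 : (0:ℝ) < z := by linarith
  have h1 : (1:ℝ) ≤ (z^2+z/3+1/18)/z^2 := by
    rw [le_div_iff₀ (by positivity)]
    nlinarith
  have := Real.log_nonneg h1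
  linarith

set_option maxHeartbeats 1600000 in
lemma tail_bound (z : ℝ) (hz : 1 ≤ z) : Dfun z ≤ 4/z := by
  set m : ℕ := ⌊z⌋₊ with hmdef
  have hm1 : 1 ≤ m := Nat.le_floor (by exact_mod_cast hz)
  have hm0 : (0:ℝ) < m := by exact_mod_cast hm1
  have hmz : (m:ℝ) ≤ z := Nat.floor_le (by linarith)
  have hzm : z < m+1 := Nat.lt_floor_add_one z
  have hz0 : (0:ℝ) < z := by linarith
  set θ : ℝ := z - m with hθdef
  have hθ0 : 0 ≤ θ := by simp [hθdef]; linarith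
  have hθ1 : θ < 1 := by simp [hθdef]; linarith
  clear_value θ
  clear_value m
  clear hmdef
  -- log Gamma bound via log-convexity
  have hGpos : ∀ w : ℝ, 0 < w → 0 < Real.Gamma w := fun w hw => Real.Gamma_pos_of_pos hw
  have hfp : (0:ℝ) < (m.factorial : ℝ) := by exact_mod_cast m.factorial_pos
  have hfp1 : (0:ℝ) < ((m+1).factorial : ℝ) := by exact_mod_cast (m+1).factorial_pos
  have hgauss : Real.log (Real.Gamma (z+1))
      ≤ (1-θ) * Real.log (m.factorial : ℝ) + θ * Real.log ((m+1).factorial : ℝ) := by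
    have hG1 : Real.Gamma ((m:ℝ)+1) = (m.factorial : ℝ) := Real.Gamma_nat_eq_factorial m
    have hG2 : Real.Gamma ((m:ℝ)+2) = ((m+1).factorial : ℝ) := by
      have h := Real.Gamma_nat_eq_factorial (m+1)
      push_cast at h
      rw [show ((m:ℝ)+2) = (m:ℝ)+1+1 by ring]
      exact h
    rcases eq_or_lt_of_le hθ0 with h0 | hpos
    · have hzm' : z = m := by simp [hθdef] at h0; linarith
      rw [hzm']
      rw [hG1]
      have : (1-θ) = 1 := by rw [← h0]; ring
      rw [← h0]
      simp [hG1]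
    · have key := Real.Gamma_mul_add_mul_le_rpow_Gamma_mul_rpow_Gamma
        (show (0:ℝ) < (m:ℝ)+1 by linarith) (show (0:ℝ) < (m:ℝ)+2 by linarith)
        (show (0:ℝ) < 1-θ by linarith) hpos (by ring)
      have harg : (1-θ)*((m:ℝ)+1) + θ*((m:ℝ)+2) = z+1 := by rw [hθdef]; ring
      rw [harg] at key
      have hr1 : (0:ℝ) < Real.Gamma ((m:ℝ)+1) ^ (1-θ) :=
        Real.rpow_pos_of_pos (hGpos _ (by linarith)) _
      have hr2 : (0:ℝ) < Real.Gamma ((m:ℝ)+2) ^ θ :=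
        Real.rpow_pos_of_pos (hGpos _ (by linarith)) _
      have hlog := Real.log_le_log (hGpos _ (by linarith)) key
      rw [Real.log_mul hr1.ne' hr2.ne', Real.log_rpow (hGpos _ (by linarith)),
        Real.log_rpow (hGpos _ (by linarith)), hG1, hG2] at hlog
      exact hlog
  have hlfac1 : Real.log ((m+1).factorial : ℝ) = Real.log ((m:ℝ)+1) + Real.log (m.factorial : ℝ) := by
    rw [show (((m+1).factorial : ℕ):ℝ) = ((m:ℝ)+1) * (m.factorial : ℝ) by
      rw [Nat.factorial_succ]; push_cast; ring, Real.log_mul (by linarith) hfp.ne']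
  have hfacb := log_factorial_le m hm1
  -- assemble
  have hlogm : 0 ≤ Real.log (m:ℝ) := Real.log_nonneg (by exact_mod_cast hm1)
  have hlogz : Real.log (m:ℝ) ≤ Real.log z := Real.log_le_log hm0 hmz
  have hlogz2 : Real.log z ≤ Real.log ((m:ℝ)+1) := Real.log_le_log hz0 (by linarith)
  -- bound θ*(log(m+1) - log z) ≤ 1/m
  have hb1 : θ * (Real.log ((m:ℝ)+1) - Real.log z) ≤ 1/m := by
    have h1 : Real.log ((m:ℝ)+1) - Real.log z ≤ Real.log ((m:ℝ)+1) - Real.log m := by linarith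
    have h2 : Real.log ((m:ℝ)+1) - Real.log (m:ℝ) ≤ 1/m := by
      rw [← Real.log_div (by linarith) hm0.ne']
      have := Real.log_le_sub_one_of_pos (show (0:ℝ) < ((m:ℝ)+1)/m by positivity)
      have heq : ((m:ℝ)+1)/m - 1 = 1/m := by field_simp; ring
      linarith
    nlinarith [sub_nonneg.2 hlogz2, hθ0, hθ1.le]
  -- bound (m+1/2)(log m - log z) ≤ -θ + 3/(4m)
  have hb2 : ((m:ℝ)+1/2) * (Real.log (m:ℝ) - Real.log z) ≤ -θ + 3/(4*m) := by
    have hu0 : 0 ≤ θ/m := by positivity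
    have hlow := log_one_add_ge hu0
    have hzq : z/m = 1 + θ/m := by field_simp [hθdef]; linarith
    have hlq : Real.log z - Real.log m = Real.log (1+θ/m) := by
      rw [← Real.log_div hz0.ne' hm0.ne', hzq]
    have h2 : 2*(θ/m)/(2+θ/m) ≥ θ/m - (θ/m)^2/2 := by
      have hd : (0:ℝ) < 2 + θ/m := by positivity
      rw [ge_iff_le, le_div_iff₀ hd]
      have hu0' : 0 ≤ (θ/m)^3 := by positivity
      nlinarith [hu0']
    have h3 : Real.log z - Real.log m ≥ θ/m - (θ/m)^2/2 := by
      rw [hlq]; linarith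
    have hm12 : (0:ℝ) < (m:ℝ)+1/2 := by linarith
    have h4 : ((m:ℝ)+1/2) * (Real.log (m:ℝ) - Real.log z) ≤ ((m:ℝ)+1/2) * (-(θ/m - (θ/m)^2/2)) := by
      apply mul_le_mul_of_nonneg_left _ hm12.le
      linarith
    refine h4.trans ?_
    rw [← sub_nonneg]
    have hexp : -θ + 3/(4*(m:ℝ)) - ((m:ℝ)+1/2) * (-(θ/(m:ℝ) - (θ/(m:ℝ))^2/2))
        = (3*(m:ℝ) + 2*(m:ℝ)*θ*(1-θ) - θ^2) / (4*(m:ℝ)^2) := by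
      field_simp
      ring
    rw [hexp]
    apply div_nonneg _ (by positivity)
    have hp1 : 0 ≤ (m:ℝ)*θ*(1-θ) := mul_nonneg (mul_nonneg hm0.le hθ0) (by linarith)
    have hθ2 : θ^2 ≤ 1 := by nlinarith
    have hm1' : (1:ℝ) ≤ (m:ℝ) := by exact_mod_cast hm1
    linarith
  -- final assembly
  have hRz := Rfun_nonneg hz
  have hsplit : (z+1/2)*Real.log z = ((m:ℝ)+1/2)*Real.log z + θ*Real.log z := by
    rw [hθdef]; ring
  have hθq : θ*Real.log ((m:ℝ)+1) - θ*Real.log z = θ*(Real.log ((m:ℝ)+1) - Real.log z) := by ring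
  have hgauss2 : Real.log (Real.Gamma (z+1))
      ≤ Real.log (m.factorial : ℝ) + θ * Real.log ((m:ℝ)+1) := by
    rw [hlfac1] at hgauss
    linarith [hgauss]
  have hzmid : z = (m:ℝ) + θ := by rw [hθdef]; ring
  have hchain : Dfun z ≤ 1/(12*(m:ℝ)) + θ + (((m:ℝ)+1/2) * (Real.log (m:ℝ) - Real.log z))
      + θ*(Real.log ((m:ℝ)+1) - Real.log z) := by
    unfold Dfun
    have e1 : ((m:ℝ)+1/2)*Real.log (m:ℝ) - ((m:ℝ)+1/2)*Real.log z
        = ((m:ℝ)+1/2) * (Real.log (m:ℝ) - Real.log z) := by ring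
    linarith [hgauss2, hfacb, hRz, hsplit, hθq, hzmid, e1]
  have hfin : Dfun z ≤ 11/(6*(m:ℝ)) := by
    have : 1/(12*(m:ℝ)) + 3/(4*(m:ℝ)) + 1/(m:ℝ) = 11/(6*(m:ℝ)) := by
      field_simp; ring
    linarith [hchain, hb1, hb2]
  refine hfin.trans ?_
  rw [div_le_div_iff₀ (by positivity) hz0]
  have hm1' : (1:ℝ) ≤ (m:ℝ) := by exact_mod_cast hm1
  linarith

lemma step_lemma (y : ℝ) (hy : 1 ≤ y) : Dfun y < Dfun (y+1) := by
  have hy0 : (0:ℝ) < y := by linarith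
  have hy1 : (0:ℝ) < y+1 := by linarith
  -- Gamma recurrence
  have hGpos : 0 < Real.Gamma (y+1) := Real.Gamma_pos_of_pos hy1
  have hGrec : Real.Gamma (y+1+1) = (y+1) * Real.Gamma (y+1) := Real.Gamma_add_one hy1.ne'
  have hlogG : Real.log (Real.Gamma (y+1+1)) = Real.log (y+1) + Real.log (Real.Gamma (y+1)) := by
    rw [hGrec, Real.log_mul hy1.ne' hGpos.ne']
  -- abbreviations
  set S : ℝ := 36*y^4+84*y^3+56*y^2+8*y+1 with hSdef
  set T : ℝ := 6*y^2+8*y+1 with hTdef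
  have hS : (0:ℝ) < S := by rw [hSdef]; positivity
  have hT : (0:ℝ) < T := by rw [hTdef]; positivity
  have hTS : T < S := by rw [hSdef, hTdef]; nlinarith [pow_pos hy0 3, pow_pos hy0 4, sq_nonneg y]
  set w : ℝ := T/S with hwdef
  have hw0 : 0 ≤ w := by positivity
  have hw1 : w < 1 := by rw [hwdef, div_lt_one hS]; exact hTS
  -- P values
  have hPy : (0:ℝ) < y^2+y/3+1/18 := by positivity
  have hPy1 : (0:ℝ) < (y+1)^2+(y+1)/3+1/18 := by positivity
  -- identification of 1±w
  have hN : 1 + w = 2*((18*y^2+6*y+1)*(y+1)^2)/S := by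
    rw [hwdef, hSdef, hTdef]; field_simp; ring
  have hD : 1 - w = 2*((18*y^2+42*y+25)*y^2)/S := by
    rw [hwdef, hSdef, hTdef]; field_simp; ring
  have hNpos : (0:ℝ) < (18*y^2+6*y+1)*(y+1)^2 := by positivity
  have hDpos : (0:ℝ) < (18*y^2+42*y+25)*y^2 := by positivity
  -- artanh lower bound on log N - log D
  have hlogND : Real.log ((18*y^2+6*y+1)*(y+1)^2) - Real.log ((18*y^2+42*y+25)*y^2)
      = Real.log (1+w) - Real.log (1-w) := by
    rw [hN, hD, Real.log_div (by positivity) hS.ne', Real.log_div (by positivity) hS.ne',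
      Real.log_mul two_ne_zero hNpos.ne', Real.log_mul two_ne_zero hDpos.ne']
    ring
  have hart := artanh_lower hw0 hw1
  -- connect N, D to P-values
  have hNP : Real.log ((18*y^2+6*y+1)*(y+1)^2)
      = Real.log 18 + Real.log (y^2+y/3+1/18) + 2*Real.log (y+1) := by
    rw [show (18*y^2+6*y+1)*(y+1)^2 = (18*(y^2+y/3+1/18))*(y+1)^2 by ring,
      Real.log_mul (by positivity) (by positivity), Real.log_mul (by norm_num) hPy.ne',
      show ((y+1)^2 : ℝ) = (y+1)^(2:ℕ) by norm_num, Real.log_pow]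
    push_cast; ring
  have hDP : Real.log ((18*y^2+42*y+25)*y^2)
      = Real.log 18 + Real.log ((y+1)^2+(y+1)/3+1/18) + 2*Real.log y := by
    rw [show (18*y^2+42*y+25)*y^2 = (18*((y+1)^2+(y+1)/3+1/18))*y^2 by ring,
      Real.log_mul (by positivity) (by positivity), Real.log_mul (by norm_num) hPy1.ne',
      show (y^2 : ℝ) = y^(2:ℕ) by norm_num, Real.log_pow]
    push_cast; ring
  -- R-difference
  have hRy : Real.log ((y^2+y/3+1/18)/y^2) = Real.log (y^2+y/3+1/18) - 2*Real.log y := by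
    rw [Real.log_div hPy.ne' (by positivity),
      show (y^2 : ℝ) = y^(2:ℕ) by norm_num, Real.log_pow]
    push_cast; ring
  have hRy1 : Real.log (((y+1)^2+(y+1)/3+1/18)/(y+1)^2)
      = Real.log ((y+1)^2+(y+1)/3+1/18) - 2*Real.log (y+1) := by
    rw [Real.log_div hPy1.ne' (by positivity),
      show ((y+1)^2 : ℝ) = (y+1)^(2:ℕ) by norm_num, Real.log_pow]
    push_cast; ring
  -- the two main bounds
  have hup := logratio_upper y hy
  have hkey := key_poly y hy
  rw [← hSdef, ← hTdef, ← hwdef] at hkey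
  -- assemble
  unfold Dfun
  rw [hlogG]
  have hgoal : (1/4)*(2*w + 2/3*w^3)
      ≤ (1/4)*(Real.log (1+w) - Real.log (1-w)) := by linarith
  rw [← hlogND] at hgoal
  rw [hNP, hDP] at hgoal
  linarith [hup, hkey, hgoal, hRy, hRy1]

lemma iterate_le (x : ℝ) (hx : 1 ≤ x) : ∀ n : ℕ, Dfun x ≤ Dfun (x + n) := by
  intro n
  induction n with
  | zero => simp
  | succ k ih =>
    have h1 : (1:ℝ) ≤ x + k := by
      have : (0:ℝ) ≤ k := Nat.cast_nonneg k
      linarith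
    have h2 := (step_lemma (x + k) h1).le
    push_cast
    push_cast at ih
    calc Dfun x ≤ Dfun (x + k) := ih
      _ ≤ Dfun (x + k + 1) := h2
      _ = Dfun (x + (k + 1)) := by ring_nf

lemma Dfun_neg (x : ℝ) (hx : 1 ≤ x) : Dfun x < 0 := by
  have h1 : Dfun x < Dfun (x+1) := step_lemma x hx
  have h2 : ∀ n : ℕ, Dfun (x+1) ≤ 4/(x+1+n) := by
    intro n
    have hn0 : (0:ℝ) ≤ n := Nat.cast_nonneg n
    exact (iterate_le (x+1) (by linarith) n).trans (tail_bound (x+1+n) (by linarith))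
  have h3 : Tendsto (fun n : ℕ => 4/(x+1+n)) atTop (𝓝 0) := by
    apply Tendsto.div_atTop tendsto_const_nhds
    apply tendsto_atTop_add_const_left
    exact tendsto_natCast_atTop_atTop
  have h4 : Dfun (x+1) ≤ 0 := ge_of_tendsto' h3 h2
  linarith

theorem stmt_10 (x : ℝ) (hx : 1 ≤ x) :
    Real.Gamma (x + 1) <
      Real.sqrt (2 * Real.pi) * x ^ x * Real.exp (-x) *
        (x^2 + x/3 + 1/18) ^ ((1:ℝ)/4) := by
  have hx0 : (0:ℝ) < x := by linarith
  have hP : (0:ℝ) < x^2 + x/3 + 1/18 := by positivity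
  have hG : 0 < Real.Gamma (x+1) := Real.Gamma_pos_of_pos (by linarith)
  have hsq : (0:ℝ) < Real.sqrt (2*Real.pi) := by
    have := Real.pi_pos; positivity
  have hxx : (0:ℝ) < x ^ x := Real.rpow_pos_of_pos hx0 x
  have hq : (0:ℝ) < (x^2 + x/3 + 1/18) ^ ((1:ℝ)/4) := Real.rpow_pos_of_pos hP _
  have hRHS : 0 < Real.sqrt (2*Real.pi) * x ^ x * Real.exp (-x) * (x^2 + x/3 + 1/18) ^ ((1:ℝ)/4) := by
    positivity
  rw [← Real.log_lt_log_iff hG hRHS]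
  have hlogRHS : Real.log (Real.sqrt (2*Real.pi) * x ^ x * Real.exp (-x) * (x^2 + x/3 + 1/18) ^ ((1:ℝ)/4))
      = Real.log (Real.sqrt (2*Real.pi)) + x * Real.log x + (-x) + (1/4) * Real.log (x^2 + x/3 + 1/18) := by
    rw [Real.log_mul (by positivity) hq.ne', Real.log_mul (by positivity) (Real.exp_ne_zero _),
      Real.log_mul hsq.ne' hxx.ne', Real.log_exp, Real.log_rpow hx0, Real.log_rpow hP]
  rw [hlogRHS]
  have hD := Dfun_neg x hx
  unfold Dfun at hD
  have hsplit : Real.log ((x^2+x/3+1/18)/x^2)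
      = Real.log (x^2+x/3+1/18) - 2*Real.log x := by
    rw [Real.log_div hP.ne' (by positivity),
      show (x^2 : ℝ) = x^(2:ℕ) by norm_num, Real.log_pow]
    push_cast; ring
  rw [hsplit] at hD
  linarith
end

section
/- The constant a* = 1/18 is best possible in the inequality Γ(x+1) < √(2π)·x^x·e^{−x}·(x² + x/3 + a*)^{1/4} for x ≥ 1; equivalently, the limit as x → ∞ of (Γ(x+1)/(√(2π)·x^x·e^{−x}))⁴ − x² − x/3 equals 1/18. -/
open Filter Real Finset Topology

noncomputable def mu (x : ℝ) : ℝ :=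
  Real.log (Real.Gamma (x+1)) - (x + 1/2) * Real.log x + x - Real.log (Real.sqrt (2*Real.pi))

lemma mu_rec {x : ℝ} (hx : 0 < x) :
    mu x - mu (x+1) = (x + 1/2) * (Real.log (x+1) - Real.log x) - 1 := by
  have h1 : Real.Gamma (x+1+1) = (x+1) * Real.Gamma (x+1) :=
    Real.Gamma_add_one (by positivity)
  have h2 : Real.Gamma (x+1) > 0 := Real.Gamma_pos_of_pos (by positivity)
  simp only [mu, h1, Real.log_mul (by positivity : (x:ℝ)+1 ≠ 0) (ne_of_gt h2)]
  ring

-- series for h(x) := (x+1/2)(log(x+1)-log x) - 1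
lemma h_hasSum {x : ℝ} (hx : 0 < x) :
    HasSum (fun k : ℕ => (1/(2*(k:ℝ)+3)) * ((1/(2*x+1))^2)^(k+1))
      ((x + 1/2) * (Real.log (x+1) - Real.log x) - 1) := by
  have h0 := (Real.hasSum_log_one_add_inv hx).mul_left (x + 1/2)
  have hlog : Real.log (1 + x⁻¹) = Real.log (x+1) - Real.log x := by
    rw [show (1:ℝ) + x⁻¹ = (x+1)/x by field_simp, Real.log_div (by positivity) (ne_of_gt hx)]
  rw [hlog] at h0
  have hform : ∀ k : ℕ, (x + 1/2) * ((2:ℝ) * (1 / (2 * (k:ℝ) + 1)) * (1 / (2 * x + 1)) ^ (2 * k + 1))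
      = (1/(2*(k:ℝ)+1)) * ((1/(2*x+1))^2)^k := by
    intro k
    have h1 : (0:ℝ) < 2*(k:ℝ)+1 := by positivity
    have h2 : (0:ℝ) < 2*x+1 := by linarith
    rw [pow_add, pow_mul, pow_one]
    have h3 : (2:ℝ)*x+1 ≠ 0 := ne_of_gt h2
    field_simp
  have h0' : HasSum (fun k : ℕ => (1/(2*(k:ℝ)+1)) * ((1/(2*x+1))^2)^k)
      ((x + 1/2) * (Real.log (x+1) - Real.log x)) := by
    convert h0 using 2 with k
    · rfl
    exact (hform k).symm
  have := (hasSum_nat_add_iff' 1).mpr h0'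
  simp only [Finset.range_one, Finset.sum_singleton] at this
  convert this using 2 with k
  · rfl
  · push_cast; ring_nf
  · norm_num

lemma h_le {x : ℝ} (hx : 0 < x) :
    (x + 1/2) * (Real.log (x+1) - Real.log x) - 1 ≤ 1/(12*x) - 1/(12*(x+1)) := by
  have h2x : (0:ℝ) < 2*x+1 := by linarith
  set t2 : ℝ := (1/(2*x+1))^2 with ht2
  have ht2pos : 0 < t2 := by positivity
  have ht2lt : t2 < 1 := by
    rw [ht2, div_pow, one_pow, div_lt_one (by positivity)]
    nlinarith
  have hgeom : HasSum (fun k : ℕ => (1/3) * t2^(k+1)) ((1/3) * t2 * (1-t2)⁻¹) := by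
    have := (hasSum_geometric_of_lt_one ht2pos.le ht2lt).mul_left ((1/3) * t2)
    convert this using 2 with k
    · rfl
    ring
  have hle := hasSum_le (fun k => ?_) (h_hasSum hx) hgeom
  · refine hle.trans (le_of_eq ?_)
    have h1 : (1:ℝ) - t2 = (4*x^2+4*x)/(2*x+1)^2 := by
      rw [ht2, div_pow, one_pow]; field_simp; ring
    rw [h1, ht2, div_pow, one_pow]
    rw [inv_div]
    field_simp
    ring
  · have : (0:ℝ) < 2*(k:ℝ)+3 := by positivity
    have h4 : (1:ℝ)/(2*(k:ℝ)+3) ≤ 1/3 := by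
      apply div_le_div_of_nonneg_left (by norm_num) (by norm_num) (by linarith [Nat.cast_nonneg (α := ℝ) k])
    have h5 : (0:ℝ) < t2^(k+1) := by positivity
    calc (1/(2*(k:ℝ)+3)) * t2^(k+1) ≤ (1/3) * t2^(k+1) := by
          exact mul_le_mul_of_nonneg_right h4 h5.le
      _ = (1/3) * t2^(k+1) := rfl

lemma h_ge {x : ℝ} (hx : 0 < x) :
    (1/(12*x) - 1/(144*x^3)) - (1/(12*(x+1)) - 1/(144*(x+1)^3))
      ≤ (x + 1/2) * (Real.log (x+1) - Real.log x) - 1 := by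
  have h2x : (0:ℝ) < 2*x+1 := by linarith
  have hx1 : (0:ℝ) < x+1 := by linarith
  have h0 := le_hasSum (h_hasSum hx) 0 (fun k _ => by positivity)
  simp only [Nat.cast_zero] at h0
  refine le_trans ?_ h0
  have hineq : (1/(12*x) - 1/(144*x^3)) - (1/(12*(x+1)) - 1/(144*(x+1)^3))
      ≤ 1/(3*(2*x+1)^2) := by
    rw [← sub_nonneg]
    have hexp : 1/(3*(2*x+1)^2) - ((1/(12*x) - 1/(144*x^3)) - (1/(12*(x+1)) - 1/(144*(x+1)^3)))
        = (21*x^2 + 21*x + 3) / (432 * x^3 * (x+1)^3 * (2*x+1)^2) := by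
      field_simp
      ring
    rw [hexp]
    positivity
  refine hineq.trans (le_of_eq ?_)
  norm_num
  ring

lemma mu_teles {x : ℝ} (hx : 1 ≤ x) (n : ℕ) :
    mu (x+n) + ((1/(12*x) - 1/(144*x^3)) - (1/(12*(x+n)) - 1/(144*(x+n)^3))) ≤ mu x ∧
    mu x ≤ mu (x+n) + (1/(12*x) - 1/(12*(x+n))) := by
  induction n with
  | zero => simp
  | succ n ih =>
    have hxn : (0:ℝ) < x + n := by
      have := Nat.cast_nonneg (α := ℝ) n; linarith
    have hrec := mu_rec hxn
    have hle := h_le hxn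
    have hge := h_ge hxn
    have hcast : x + ((n:ℕ)+1 : ℕ) = (x + n) + 1 := by push_cast; ring
    constructor
    · have := ih.1
      rw [hcast]
      have h2 : mu (x+n) - mu (x+n+1) ≥
          (1/(12*(x+n)) - 1/(144*(x+n)^3)) - (1/(12*((x+n)+1)) - 1/(144*((x+n)+1)^3)) := by
        rw [hrec]; exact hge
      push_cast at this ⊢
      linarith
    · have := ih.2
      rw [hcast]
      have h2 : mu (x+n) - mu (x+n+1) ≤ 1/(12*(x+n)) - 1/(12*((x+n)+1)) := by
        rw [hrec]; exact hle
      push_cast at this ⊢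
      linarith

lemma exp_mu {y : ℝ} (hy : 0 < y) :
    Real.exp (mu y) = Real.Gamma (y+1) * Real.exp y / (y ^ (y + 1/2) * Real.sqrt (2*Real.pi)) := by
  have hG : 0 < Real.Gamma (y+1) := Real.Gamma_pos_of_pos (by positivity)
  have hs : 0 < Real.sqrt (2*Real.pi) := Real.sqrt_pos.mpr (by positivity)
  have hmu : mu y = (Real.log (Real.Gamma (y+1)) + y) - (Real.log y * (y + 1/2) + Real.log (Real.sqrt (2*Real.pi))) := by
    rw [mu]; ring
  rw [hmu, Real.exp_sub, Real.exp_add, Real.exp_add, Real.exp_log hG, Real.exp_log hs,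
    ← Real.rpow_def_of_pos hy]

lemma Gamma_prod {x : ℝ} (hx : 0 < x) (n : ℕ) :
    Real.Gamma (x + n + 1) = Real.Gamma x * ∏ j ∈ Finset.range (n+1), (x + j) := by
  induction n with
  | zero => simp [Real.Gamma_add_one hx.ne']; ring
  | succ n ih =>
    have h1 : x + ((n:ℕ)+1:ℕ) + 1 = (x + n + 1) + 1 := by push_cast; ring
    have h2 : (0:ℝ) < x + n + 1 := by have := Nat.cast_nonneg (α := ℝ) n; linarith
    rw [h1, Real.Gamma_add_one h2.ne', ih, Finset.prod_range_succ _ (n+1), Nat.cast_add, Nat.cast_one]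
    ring

lemma tendsto_A {x : ℝ} (hx : 1 ≤ x) :
    Tendsto (fun n : ℕ => Real.Gamma (x + n + 1) / ((n:ℝ) ^ (x:ℝ) * ((Nat.factorial n : ℕ) : ℝ))) atTop (𝓝 1) := by
  have hx0 : (0:ℝ) < x := lt_of_lt_of_le one_pos hx
  have hG : Real.Gamma x ≠ 0 := (Real.Gamma_pos_of_pos hx0).ne'
  have h1 : Tendsto (fun n : ℕ => Real.Gamma x / Real.GammaSeq x n) atTop
      (𝓝 (Real.Gamma x / Real.Gamma x)) :=
    tendsto_const_nhds.div (Real.GammaSeq_tendsto_Gamma x) hG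
  rw [div_self hG] at h1
  refine h1.congr' ?_
  filter_upwards [eventually_ge_atTop 1] with n hn
  have hn0 : (0:ℝ) < n := by exact_mod_cast hn
  have hGn : 0 < Real.Gamma (x+n+1) := Real.Gamma_pos_of_pos (by positivity)
  have hfac : (0:ℝ) < ((Nat.factorial n : ℕ) : ℝ) := by exact_mod_cast Nat.factorial_pos n
  have hnp : (0:ℝ) < (n:ℝ) ^ (x:ℝ) := Real.rpow_pos_of_pos hn0 _
  have hprod : ∏ j ∈ Finset.range (n+1), (x + (j:ℝ)) = Real.Gamma (x+n+1)/Real.Gamma x := by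
    rw [Gamma_prod hx0]; field_simp
  rw [Real.GammaSeq, hprod]
  rw [div_div_eq_mul_div]
  rw [mul_div_cancel₀ _ hG]

lemma tendsto_base {x : ℝ} (hx : 1 ≤ x) :
    Tendsto (fun n : ℕ => (n:ℝ)/(x+n)) atTop (𝓝 1) := by
  have hx0 : (0:ℝ) < x := lt_of_lt_of_le one_pos hx
  have h0 : Tendsto (fun y : ℝ => x/(x+y)) atTop (𝓝 0) :=
    Tendsto.div_atTop tendsto_const_nhds (tendsto_atTop_add_const_left _ x tendsto_id)
  have h1 : Tendsto (fun y : ℝ => 1 - x/(x+y)) atTop (𝓝 (1 - 0)) :=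
    tendsto_const_nhds.sub h0
  norm_num at h1
  have h2 : Tendsto (fun y : ℝ => y/(x+y)) atTop (𝓝 1) := by
    refine h1.congr' ?_
    filter_upwards [eventually_gt_atTop 0] with y hy
    have : x + y ≠ 0 := by positivity
    field_simp
    ring
  exact h2.comp tendsto_natCast_atTop_atTop

lemma tendsto_C {x : ℝ} (hx : 1 ≤ x) :
    Tendsto (fun n : ℕ => ((n:ℝ)/(x+n)) ^ (x:ℝ) * ((n:ℝ)/(x+n)) ^ ((1:ℝ)/2)
      * (Real.exp x * ((1+x/(n:ℝ))^n)⁻¹)) atTop (𝓝 1) := by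
  have h1 : Tendsto (fun n : ℕ => ((n:ℝ)/(x+n)) ^ (x:ℝ)) atTop (𝓝 1) := by
    have := (tendsto_base hx).rpow_const (p := x) (Or.inl one_ne_zero)
    simpa using this
  have h2 : Tendsto (fun n : ℕ => ((n:ℝ)/(x+n)) ^ ((1:ℝ)/2)) atTop (𝓝 1) := by
    have := (tendsto_base hx).rpow_const (p := (1:ℝ)/2) (Or.inl one_ne_zero)
    simpa using this
  have h3 : Tendsto (fun n : ℕ => Real.exp x * ((1+x/(n:ℝ))^n)⁻¹) atTop
      (𝓝 (Real.exp x * (Real.exp x)⁻¹)) :=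
    tendsto_const_nhds.mul ((Real.tendsto_one_add_div_pow_exp x).inv₀ (Real.exp_ne_zero x))
  rw [mul_inv_cancel₀ (Real.exp_ne_zero x)] at h3
  have := (h1.mul h2).mul h3
  simpa using this

lemma exp_mu_eq {x : ℝ} (hx : 1 ≤ x) {n : ℕ} (hn : 1 ≤ n) :
    Real.exp (mu (x + n)) =
      (Real.Gamma (x + n + 1) / ((n:ℝ) ^ (x:ℝ) * ((Nat.factorial n : ℕ) : ℝ)))
      * (Stirling.stirlingSeq n / Real.sqrt Real.pi)
      * (((n:ℝ)/(x+n)) ^ (x:ℝ) * ((n:ℝ)/(x+n)) ^ ((1:ℝ)/2)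
          * (Real.exp x * ((1+x/(n:ℝ))^n)⁻¹)) := by
  have hx0 : (0:ℝ) < x := lt_of_lt_of_le one_pos hx
  have hn0 : (0:ℝ) < n := by exact_mod_cast hn
  have hy : (0:ℝ) < x + n := by positivity
  rw [exp_mu hy, Stirling.stirlingSeq]
  rw [Real.div_rpow hn0.le hy.le, Real.div_rpow hn0.le hy.le]
  rw [show (1:ℝ) + x/(n:ℝ) = (x+n)/n by field_simp; ring]
  rw [div_pow]
  have hsplit : (x+(n:ℝ)) ^ (x + (n:ℝ) + 1/2) = (x+(n:ℝ))^(x:ℝ) * ((x+(n:ℝ))^(n:ℕ) * (x+(n:ℝ))^((1:ℝ)/2)) := by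
    rw [← Real.rpow_natCast (x+(n:ℝ)) n, ← Real.rpow_add hy, ← Real.rpow_add hy]
    ring_nf
  rw [hsplit]
  rw [Real.sqrt_mul (by norm_num : (0:ℝ) ≤ 2) Real.pi,
      Real.sqrt_mul (by norm_num : (0:ℝ) ≤ 2) (n:ℝ),
      Real.sqrt_eq_rpow (n:ℝ), div_pow, Real.exp_one_pow]
  have h2 : (0:ℝ) < Real.sqrt 2 := by positivity
  have hpi : (0:ℝ) < Real.sqrt Real.pi := Real.sqrt_pos.mpr Real.pi_pos
  have e1 : ((n:ℝ) ^ (x:ℝ)) ≠ 0 := (Real.rpow_pos_of_pos hn0 _).ne'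
  have e2 : ((n:ℝ) ^ ((1:ℝ)/2)) ≠ 0 := (Real.rpow_pos_of_pos hn0 _).ne'
  have e3 : ((x+(n:ℝ)) ^ (x:ℝ)) ≠ 0 := (Real.rpow_pos_of_pos hy _).ne'
  have e4 : ((x+(n:ℝ)) ^ ((1:ℝ)/2)) ≠ 0 := (Real.rpow_pos_of_pos hy _).ne'
  have e5 : ((x+(n:ℝ)) ^ (n:ℕ)) ≠ 0 := by positivity
  have e6 : ((n:ℝ) ^ (n:ℕ)) ≠ 0 := by positivity
  have e7 : (((Nat.factorial n : ℕ):ℝ)) ≠ 0 := by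
    exact_mod_cast (Nat.factorial_pos n).ne'
  have e8 : Real.exp ((n:ℝ)) ≠ 0 := Real.exp_ne_zero _
  have e9 : Real.exp x ≠ 0 := Real.exp_ne_zero _
  rw [Real.exp_add]
  field_simp

lemma mu_tendsto_zero {x : ℝ} (hx : 1 ≤ x) :
    Tendsto (fun n : ℕ => mu (x + n)) atTop (𝓝 0) := by
  have hpi : (0:ℝ) < Real.sqrt Real.pi := Real.sqrt_pos.mpr Real.pi_pos
  have hB : Tendsto (fun n : ℕ => Stirling.stirlingSeq n / Real.sqrt Real.pi) atTop (𝓝 1) := by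
    have := Stirling.tendsto_stirlingSeq_sqrt_pi.div_const (Real.sqrt Real.pi)
    rwa [div_self hpi.ne'] at this
  have hprod := ((tendsto_A hx).mul hB).mul (tendsto_C hx)
  rw [show (1:ℝ)*1*1 = 1 by norm_num] at hprod
  have hexp : Tendsto (fun n : ℕ => Real.exp (mu (x + n))) atTop (𝓝 1) := by
    refine hprod.congr' ?_
    filter_upwards [eventually_ge_atTop 1] with n hn
    exact (exp_mu_eq hx hn).symm
  have hlog := (Real.continuousAt_log one_ne_zero).tendsto.comp hexp
  simp only [Function.comp_def, Real.log_exp, Real.log_one] at hlog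
  exact hlog

lemma aux_tendsto {x : ℝ} (hx : 1 ≤ x) (c : ℝ) (k : ℕ) (hk : k ≠ 0) (hc : 0 < c) :
    Tendsto (fun n : ℕ => 1/(c*(x+n)^k)) atTop (𝓝 0) := by
  have h1 : Tendsto (fun n : ℕ => x + (n:ℝ)) atTop atTop :=
    tendsto_atTop_add_const_left _ x tendsto_natCast_atTop_atTop
  have h2 : Tendsto (fun n : ℕ => c*(x+(n:ℝ))^k) atTop atTop :=
    ((tendsto_pow_atTop hk).comp h1).const_mul_atTop hc
  simpa only [one_div, Pi.inv_def] using h2.inv_tendsto_atTop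

lemma mu_le {x : ℝ} (hx : 1 ≤ x) : mu x ≤ 1/(12*x) := by
  have key : ∀ n : ℕ, mu x ≤ mu (x+n) + (1/(12*x) - 1/(12*(x+n))) := fun n => (mu_teles hx n).2
  have ht : Tendsto (fun n : ℕ => mu (x+n) + (1/(12*x) - 1/(12*(x+n)))) atTop
      (𝓝 (0 + (1/(12*x) - 0))) := by
    refine (mu_tendsto_zero hx).add (tendsto_const_nhds.sub ?_)
    simpa using aux_tendsto hx 12 1 one_ne_zero (by norm_num)
  rw [zero_add, sub_zero] at ht
  exact ge_of_tendsto' ht key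

lemma mu_ge {x : ℝ} (hx : 1 ≤ x) : 1/(12*x) - 1/(144*x^3) ≤ mu x := by
  have key : ∀ n : ℕ, mu (x+n) + ((1/(12*x) - 1/(144*x^3)) - (1/(12*(x+n)) - 1/(144*(x+n)^3))) ≤ mu x :=
    fun n => (mu_teles hx n).1
  have ht : Tendsto (fun n : ℕ => mu (x+n) + ((1/(12*x) - 1/(144*x^3)) - (1/(12*(x+n)) - 1/(144*(x+n)^3))))
      atTop (𝓝 (0 + ((1/(12*x) - 1/(144*x^3)) - (0 - 0)))) := by
    refine (mu_tendsto_zero hx).add (tendsto_const_nhds.sub (Tendsto.sub ?_ ?_))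
    · simpa using aux_tendsto hx 12 1 one_ne_zero (by norm_num)
    · exact aux_tendsto hx 144 3 (by norm_num) (by norm_num)
  rw [zero_add, sub_zero, sub_zero] at ht
  exact le_of_tendsto' ht key

lemma ratio_eq {x : ℝ} (hx : 1 ≤ x) :
    Real.Gamma (x + 1) / (Real.sqrt (2 * Real.pi) * x ^ x * Real.exp (-x))
      = Real.sqrt x * Real.exp (mu x) := by
  have hx0 : (0:ℝ) < x := lt_of_lt_of_le one_pos hx
  have hs : (0:ℝ) < Real.sqrt (2*Real.pi) := Real.sqrt_pos.mpr (by positivity)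
  rw [exp_mu hx0]
  rw [show x + 1/2 = (x:ℝ) + (1/2:ℝ) by norm_num, Real.rpow_add hx0, ← Real.sqrt_eq_rpow,
    Real.exp_neg]
  have e1 : (x:ℝ) ^ (x:ℝ) ≠ 0 := (Real.rpow_pos_of_pos hx0 _).ne'
  have e2 : Real.sqrt x ≠ 0 := (Real.sqrt_pos.mpr hx0).ne'
  have e3 : Real.exp x ≠ 0 := Real.exp_ne_zero x
  field_simp

lemma pow4_eq {x : ℝ} (hx : 1 ≤ x) :
    (Real.sqrt x * Real.exp (mu x))^4 = x^2 * Real.exp (4 * mu x) := by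
  have hx0 : (0:ℝ) ≤ x := le_trans zero_le_one hx
  rw [mul_pow, show (Real.sqrt x)^4 = ((Real.sqrt x)^2)^2 by ring, Real.sq_sqrt hx0]
  rw [show (4:ℝ) * mu x = ((4:ℕ):ℝ) * mu x by norm_num, Real.exp_nat_mul]

lemma squeeze_main :
    Tendsto (fun x : ℝ => x^2 * Real.exp (4 * mu x) - x^2 - x/3) atTop (𝓝 (1/18)) := by
  -- bounds on a x := 4 * mu x for x ≥ 1
  have habove : ∀ x : ℝ, 1 ≤ x → 4 * mu x ≤ 1/(3*x) := by
    intro x hx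
    have := mu_le hx
    have hx0 : (0:ℝ) < x := lt_of_lt_of_le one_pos hx
    rw [show 1/(3*x) = 4 * (1/(12*x)) by field_simp; ring]
    linarith
  have hbelow : ∀ x : ℝ, 1 ≤ x → 1/(3*x) - 1/(36*x^3) ≤ 4 * mu x := by
    intro x hx
    have := mu_ge hx
    have hx0 : (0:ℝ) < x := lt_of_lt_of_le one_pos hx
    have h1 : 1/(3*x) - 1/(36*x^3) = 4 * (1/(12*x) - 1/(144*x^3)) := by field_simp; ring
    rw [h1]
    linarith
  have hanonneg : ∀ x : ℝ, 1 ≤ x → 0 ≤ 4 * mu x := by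
    intro x hx
    have hx0 : (0:ℝ) < x := lt_of_lt_of_le one_pos hx
    refine le_trans ?_ (hbelow x hx)
    rw [sub_nonneg, div_le_div_iff₀ (by positivity) (by positivity)]
    nlinarith [sq_nonneg x, mul_pos hx0 hx0]
  -- T1
  have hT1 : Tendsto (fun x : ℝ => x^2 * (Real.exp (4*mu x) - 1 - 4*mu x - (4*mu x)^2/2))
      atTop (𝓝 0) := by
    apply squeeze_zero_norm' (a := fun x : ℝ => 2/(243*x))
    · filter_upwards [eventually_ge_atTop 1] with x hx
      have hx0 : (0:ℝ) < x := lt_of_lt_of_le one_pos hx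
      set a := 4 * mu x with ha
      have ha0 : 0 ≤ a := hanonneg x hx
      have ha1 : a ≤ 1/(3*x) := habove x hx
      have ha2 : |a| ≤ 1 := by
        rw [abs_of_nonneg ha0]
        have : 1/(3*x) ≤ 1 := by
          rw [div_le_one (by positivity)]; linarith
        linarith
      have hb := Real.exp_bound ha2 (by norm_num : 0 < 3)
      have hsum : ∑ i ∈ Finset.range 3, a^i / (Nat.factorial i) = 1 + a + a^2/2 := by
        simp [Finset.sum_range_succ, Nat.factorial]
      rw [hsum] at hb
      have hb2 : |Real.exp a - 1 - a - a^2/2| ≤ |a|^3 * (2/9) := by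
        have : ((3:ℕ).succ : ℝ) / ((Nat.factorial 3 : ℕ) * 3) = 2/9 := by norm_num [Nat.factorial]
        calc |Real.exp a - 1 - a - a^2/2| = |Real.exp a - (1 + a + a^2/2)| := by ring_nf
          _ ≤ |a|^3 * (((3:ℕ).succ : ℝ) / ((Nat.factorial 3 : ℕ) * 3)) := hb
          _ = |a|^3 * (2/9) := by rw [this]
      have ha3 : |a|^3 ≤ 1/(27*x^3) := by
        rw [abs_of_nonneg ha0]
        calc a^3 ≤ (1/(3*x))^3 := by
              apply pow_le_pow_left₀ ha0 ha1
          _ = 1/(27*x^3) := by field_simp; ring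
      rw [norm_eq_abs, abs_mul, abs_of_nonneg (by positivity : (0:ℝ) ≤ x^2)]
      calc x^2 * |Real.exp a - 1 - a - a^2/2| ≤ x^2 * (|a|^3 * (2/9)) := by
            exact mul_le_mul_of_nonneg_left hb2 (by positivity)
        _ ≤ x^2 * ((1/(27*x^3)) * (2/9)) := by
            apply mul_le_mul_of_nonneg_left _ (by positivity)
            exact mul_le_mul_of_nonneg_right ha3 (by norm_num)
        _ = 2/(243*x) := by field_simp; ring
    · have := tendsto_inv_atTop_zero (𝕜 := ℝ)
      have h2 : Tendsto (fun x : ℝ => 243*x/2) atTop atTop := by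
        apply Tendsto.atTop_div_const (by norm_num)
        exact tendsto_id.const_mul_atTop (by norm_num)
      exact h2.inv_tendsto_atTop.congr (fun x => by
        simp only [Pi.inv_apply, inv_div])
  -- T2
  have aux_real : ∀ (c : ℝ), 0 < c → ∀ (k : ℕ), k ≠ 0 →
      Tendsto (fun x : ℝ => 1/(c*x^k)) atTop (𝓝 0) := by
    intro c hc k hk
    have h2 : Tendsto (fun x : ℝ => c*x^k) atTop atTop :=
      (tendsto_pow_atTop hk).const_mul_atTop hc
    exact h2.inv_tendsto_atTop.congr (fun x => by
      simp only [Pi.inv_apply]; rw [one_div])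
  have hT2 : Tendsto (fun x : ℝ => x^2 * (4*mu x) - x/3) atTop (𝓝 0) := by
    refine tendsto_of_tendsto_of_tendsto_of_le_of_le'
      (g := fun x : ℝ => -(1/(36*x))) (h := fun _ : ℝ => (0:ℝ)) ?_ ?_ ?_ ?_
    · simpa using (aux_real 36 (by norm_num) 1 one_ne_zero).neg
    · exact tendsto_const_nhds
    · filter_upwards [eventually_ge_atTop 1] with x hx
      have hx0 : (0:ℝ) < x := lt_of_lt_of_le one_pos hx
      have h1 := hbelow x hx
      have h2 : x^2 * (1/(3*x) - 1/(36*x^3)) = x/3 - 1/(36*x) := by field_simp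
      nlinarith [mul_le_mul_of_nonneg_left h1 (by positivity : (0:ℝ) ≤ x^2)]
    · filter_upwards [eventually_ge_atTop 1] with x hx
      have hx0 : (0:ℝ) < x := lt_of_lt_of_le one_pos hx
      have h1 := habove x hx
      have h2 : x^2 * (1/(3*x)) = x/3 := by field_simp
      nlinarith [mul_le_mul_of_nonneg_left h1 (by positivity : (0:ℝ) ≤ x^2)]
  -- T3
  have hxa : Tendsto (fun x : ℝ => x * (4 * mu x)) atTop (𝓝 (1/3)) := by
    refine tendsto_of_tendsto_of_tendsto_of_le_of_le'
      (g := fun x : ℝ => 1/3 - 1/(36*x^2)) (h := fun _ : ℝ => (1:ℝ)/3) ?_ ?_ ?_ ?_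
    · simpa using tendsto_const_nhds.sub (aux_real 36 (by norm_num) 2 (by norm_num))
    · exact tendsto_const_nhds
    · filter_upwards [eventually_ge_atTop 1] with x hx
      have hx0 : (0:ℝ) < x := lt_of_lt_of_le one_pos hx
      have h1 := hbelow x hx
      have h2 : x * (1/(3*x) - 1/(36*x^3)) = 1/3 - 1/(36*x^2) := by field_simp
      nlinarith [mul_le_mul_of_nonneg_left h1 (by positivity : (0:ℝ) ≤ x)]
    · filter_upwards [eventually_ge_atTop 1] with x hx
      have hx0 : (0:ℝ) < x := lt_of_lt_of_le one_pos hx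
      have h1 := habove x hx
      have h2 : x * (1/(3*x)) = 1/3 := by field_simp
      nlinarith [mul_le_mul_of_nonneg_left h1 (by positivity : (0:ℝ) ≤ x)]
  have hT3 : Tendsto (fun x : ℝ => (x * (4 * mu x))^2 / 2) atTop (𝓝 (1/18)) := by
    have := (hxa.pow 2).div_const 2
    norm_num at this
    convert this using 2
  have hsum := (hT1.add hT2).add hT3
  rw [show (0:ℝ) + 0 + 1/18 = 1/18 by norm_num] at hsum
  refine hsum.congr (fun x => ?_)
  ring

theorem stmt_11 :
    Tendsto (fun x : ℝ =>
      (Real.Gamma (x + 1) / (Real.sqrt (2 * Real.pi) * x ^ x * Real.exp (-x)))^4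
        - x^2 - x/3) atTop (nhds (1/18)) := by
  refine squeeze_main.congr' ?_
  filter_upwards [eventually_ge_atTop 1] with x hx
  rw [ratio_eq hx, pow4_eq hx]
end
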